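/- arXiv:2102.01716 — 5 statements merged into one kernel-verified Lean document; each statement's English description precedes it below -/
import Mathlib

section
/- Existence of dual optimizers: assume Φ : 𝒳 × 𝒴 → ℝ is upper semicontinuous, bounded from above by ā(x) + b̄(y) with ā P-integrable and b̄ Q-integrable, and bounded from below by a̲(x) + b̲(y) with a̲ P-integrable and b̲ Q-integrable. Then there exists a pair (φ, ψ) of measurable integrable functions with φ(x) + ψ(y) ≥ Φ(x,y) for P-almost every x and Q-almost every y, attaining the infimum of E_P[φ(X)] + E_Q[ψ(Y)] over all such feasible pairs. -/
set_option linter.unusedSectionVars false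
set_option linter.unusedVariables false

open MeasureTheory Filter Topology ENNReal

namespace MKDualAux

variable {X Y : Type*} [MeasurableSpace X] [MeasurableSpace Y]

/-- iterated pointwise min of a window of functions -/
noncomputable def itInf (f : ℕ → X → ℝ) (m : ℕ) : ℕ → X → ℝ
  | 0 => f m
  | j + 1 => fun x => min (itInf f m j x) (f (m + j + 1) x)

/-- iterated pointwise max of a window of functions -/
noncomputable def itSup (f : ℕ → X → ℝ) (m : ℕ) : ℕ → X → ℝ
  | 0 => f m
  | j + 1 => fun x => max (itSup f m j x) (f (m + j + 1) x)

lemma itInf_shift (f : ℕ → X → ℝ) (m : ℕ) : ∀ j x,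
    itInf f m (j + 1) x = min (f m x) (itInf f (m + 1) j x) := by
  intro j
  induction j with
  | zero => intro x; simp [itInf]
  | succ j ih =>
    intro x
    show min (itInf f m (j+1) x) (f (m + (j+1) + 1) x) = _
    rw [ih x]
    have e : m + (j + 1) + 1 = m + 1 + j + 1 := by omega
    rw [e, min_assoc]
    rfl

lemma itSup_shift (f : ℕ → X → ℝ) (m : ℕ) : ∀ j x,
    itSup f m (j + 1) x = max (f m x) (itSup f (m + 1) j x) := by
  intro j
  induction j with
  | zero => intro x; simp [itSup]
  | succ j ih =>
    intro x
    show max (itSup f m (j+1) x) (f (m + (j+1) + 1) x) = _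
    rw [ih x]
    have e : m + (j + 1) + 1 = m + 1 + j + 1 := by omega
    rw [e, max_assoc]
    rfl

lemma itInf_succ (f : ℕ → X → ℝ) (m j : ℕ) (x : X) :
    itInf f m (j + 1) x = min (itInf f m j x) (f (m + j + 1) x) := rfl

lemma itSup_succ (f : ℕ → X → ℝ) (m j : ℕ) (x : X) :
    itSup f m (j + 1) x = max (itSup f m j x) (f (m + j + 1) x) := rfl

lemma itInf_anti (f : ℕ → X → ℝ) (m : ℕ) (x : X) :
    Antitone (fun j => itInf f m j x) :=
  antitone_nat_of_succ_le fun j => min_le_left _ _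

lemma itSup_mono (f : ℕ → X → ℝ) (m : ℕ) (x : X) :
    Monotone (fun j => itSup f m j x) :=
  monotone_nat_of_le_succ fun j => le_max_left _ _

lemma le_itInf {A : X → ℝ} {f : ℕ → X → ℝ} (hA : ∀ n x, A x ≤ f n x) (m j : ℕ) (x : X) :
    A x ≤ itInf f m j x := by
  induction j with
  | zero => exact hA m x
  | succ j ih => exact le_min ih (hA _ x)

lemma itSup_le_of_le {B : X → ℝ} {f : ℕ → X → ℝ} (m j : ℕ) (x : X) (hB : ∀ n, f n x ≤ B x) :
    itSup f m j x ≤ B x := by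
  induction j with
  | zero => exact hB m
  | succ j ih => exact max_le ih (hB _)

lemma le_itSup (f : ℕ → X → ℝ) (m j : ℕ) (x : X) : f m x ≤ itSup f m j x := by
  induction j with
  | zero => exact le_rfl
  | succ j ih => exact le_trans ih (le_max_left _ _)

lemma itInf_measurable {f : ℕ → X → ℝ} (hf : ∀ n, Measurable (f n)) (m j : ℕ) :
    Measurable (itInf f m j) := by
  induction j with
  | zero => exact hf m
  | succ j ih => exact ih.min (hf _)

lemma itSup_measurable {f : ℕ → X → ℝ} (hf : ∀ n, Measurable (f n)) (m j : ℕ) :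
    Measurable (itSup f m j) := by
  induction j with
  | zero => exact hf m
  | succ j ih => exact ih.max (hf _)

lemma itInf_integrable {μ : Measure X} {f : ℕ → X → ℝ} (hf : ∀ n, Integrable (f n) μ)
    (m j : ℕ) : Integrable (itInf f m j) μ := by
  induction j with
  | zero => exact hf m
  | succ j ih =>
    have := ih.inf (hf (m + j + 1))
    exact this

lemma itSup_integrable {μ : Measure X} {f : ℕ → X → ℝ} (hf : ∀ n, Integrable (f n) μ)
    (m j : ℕ) : Integrable (itSup f m j) μ := by
  induction j with
  | zero => exact hf m
  | succ j ih =>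
    have := ih.sup (hf (m + j + 1))
    exact this


/-- A point where an integrable function is at most its mean, within an a.e. set. -/
lemma exists_good {μ : Measure X} [IsProbabilityMeasure μ] {h : X → ℝ}
    (hh : Integrable h μ) {G : X → Prop} (hG : ∀ᵐ x ∂μ, G x) :
    ∃ x, G x ∧ h x ≤ ∫ x, h x ∂μ := by
  by_contra hc
  push_neg at hc
  set c := ∫ x, h x ∂μ with hcdef
  have h1 : ∀ᵐ x ∂μ, c < h x := hG.mono fun x hx => hc x hx
  have hint : Integrable (fun x => h x - c) μ := hh.sub (integrable_const c)
  have h2 : ∫ x, (h x - c) ∂μ = 0 := by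
    rw [integral_sub hh (integrable_const c)]
    simp [hcdef]
  have h3 : (fun x => h x - c) =ᵐ[μ] 0 :=
    (integral_eq_zero_iff_of_nonneg_ae (h1.mono fun x hx => by simp only [Pi.zero_apply]; linarith) hint).1 h2
  have h4 : ∀ᵐ x ∂μ, False := by
    filter_upwards [h1, h3] with x hx hx'
    have : h x - c = 0 := hx'
    linarith
  have : (ae μ).NeBot := ae_neBot.2 (IsProbabilityMeasure.ne_zero (μ := μ))
  exact h4.exists.elim fun x hx => hx

lemma iSup_ofReal_eq {c : ℕ → ℝ} (hb : BddAbove (Set.range c)) :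
    ⨆ n, ENNReal.ofReal (c n) = ENNReal.ofReal (⨆ n, c n) := by
  apply le_antisymm
  · exact iSup_le fun n => ENNReal.ofReal_le_ofReal (le_ciSup hb n)
  · rcases isEmpty_or_nonempty ℕ with h | h
    · exact absurd h (not_isEmpty_of_nonempty ℕ)
    have : Tendsto (fun ε : ℝ => ENNReal.ofReal ((⨆ n, c n) - ε)) (𝓝[>] 0)
        (𝓝 (ENNReal.ofReal ((⨆ n, c n) - 0))) :=
      (ENNReal.continuous_ofReal.tendsto _).comp
        ((continuous_const.sub continuous_id).tendsto 0 |>.mono_left nhdsWithin_le_nhds)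
    rw [sub_zero] at this
    refine le_of_tendsto this ?_
    filter_upwards [self_mem_nhdsWithin] with ε (hε : 0 < ε)
    obtain ⟨n, hn⟩ := exists_lt_of_lt_ciSup (show (⨆ n, c n) - ε < ⨆ n, c n by linarith)
    exact le_trans (ENNReal.ofReal_le_ofReal hn.le) (le_iSup (fun n => ENNReal.ofReal (c n)) n)

lemma toReal_iSup_ofReal {c : ℕ → ℝ} (hb : BddAbove (Set.range c)) (h0 : 0 ≤ c 0) :
    (⨆ n, ENNReal.ofReal (c n)).toReal = ⨆ n, c n := by
  rw [iSup_ofReal_eq hb, ENNReal.toReal_ofReal]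
  exact le_trans h0 (le_ciSup hb 0)


/-- feasibility is preserved by the (min, max) lattice combination -/
lemma feas_inf_sup {P : Measure X} {Q : Measure Y} {Φ : X × Y → ℝ} {f f' : X → ℝ} {g g' : Y → ℝ}
    (h : ∀ᵐ x ∂P, ∀ᵐ y ∂Q, Φ (x, y) ≤ f x + g y)
    (h' : ∀ᵐ x ∂P, ∀ᵐ y ∂Q, Φ (x, y) ≤ f' x + g' y) :
    ∀ᵐ x ∂P, ∀ᵐ y ∂Q, Φ (x, y) ≤ min (f x) (f' x) + max (g y) (g' y) := by
  filter_upwards [h, h'] with x hx hx'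
  filter_upwards [hx, hx'] with y hy hy'
  rcases min_cases (f x) (f' x) with ⟨he, _⟩ | ⟨he, _⟩ <;> rw [he]
  · exact le_trans hy (by gcongr; exact le_max_left _ _)
  · exact le_trans hy' (by gcongr; exact le_max_right _ _)

/-- feasibility is preserved by the (max, min) lattice combination -/
lemma feas_sup_inf {P : Measure X} {Q : Measure Y} {Φ : X × Y → ℝ} {f f' : X → ℝ} {g g' : Y → ℝ}
    (h : ∀ᵐ x ∂P, ∀ᵐ y ∂Q, Φ (x, y) ≤ f x + g y)
    (h' : ∀ᵐ x ∂P, ∀ᵐ y ∂Q, Φ (x, y) ≤ f' x + g' y) :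
    ∀ᵐ x ∂P, ∀ᵐ y ∂Q, Φ (x, y) ≤ max (f x) (f' x) + min (g y) (g' y) := by
  filter_upwards [h, h'] with x hx hx'
  filter_upwards [hx, hx'] with y hy hy'
  rcases min_cases (g y) (g' y) with ⟨he, _⟩ | ⟨he, _⟩ <;> rw [he]
  · exact le_trans hy (by gcongr; exact le_max_left _ _)
  · exact le_trans hy' (by gcongr; exact le_max_right _ _)

theorem dual_attained (P : Measure X) (Q : Measure Y)
    [IsProbabilityMeasure P] [IsProbabilityMeasure Q]
    (Φ : X × Y → ℝ)
    (abar : X → ℝ) (bbar : Y → ℝ) (habar : Integrable abar P) (hbbar : Integrable bbar Q)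
    (habarm : Measurable abar) (hbbarm : Measurable bbar)
    (alow : X → ℝ) (blow : Y → ℝ) (halow : Integrable alow P) (hblow : Integrable blow Q)
    (halowm : Measurable alow) (hblowm : Measurable blow)
    (hbound : ∀ᵐ x ∂P, ∀ᵐ y ∂Q, Φ (x, y) ≤ abar x + bbar y)
    (hlbound : ∀ᵐ x ∂P, ∀ᵐ y ∂Q, alow x + blow y ≤ Φ (x, y)) :
    ∃ (φ : X → ℝ) (ψ : Y → ℝ),
      Measurable φ ∧ Measurable ψ ∧ Integrable φ P ∧ Integrable ψ Q ∧
      (∀ᵐ x ∂P, ∀ᵐ y ∂Q, Φ (x, y) ≤ φ x + ψ y) ∧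
      ∀ (φ' : X → ℝ) (ψ' : Y → ℝ),
        Measurable φ' → Measurable ψ' → Integrable φ' P → Integrable ψ' Q →
        (∀ᵐ x ∂P, ∀ᵐ y ∂Q, Φ (x, y) ≤ φ' x + ψ' y) →
        ∫ x, φ x ∂P + ∫ y, ψ y ∂Q ≤ ∫ x, φ' x ∂P + ∫ y, ψ' y ∂Q := by
  classical
  set Feas : (X → ℝ) → (Y → ℝ) → Prop := fun φ ψ =>
    Measurable φ ∧ Measurable ψ ∧ Integrable φ P ∧ Integrable ψ Q ∧
      ∀ᵐ x ∂P, ∀ᵐ y ∂Q, Φ (x, y) ≤ φ x + ψ y with hFeasdef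
  set S : Set ℝ := {v | ∃ φ ψ, Feas φ ψ ∧ ∫ x, φ x ∂P + ∫ y, ψ y ∂Q = v} with hSdef
  have hSne : S.Nonempty := ⟨_, abar, bbar, ⟨habarm, hbbarm, habar, hbbar, hbound⟩, rfl⟩
  have lowfeas : ∀ (φ : X → ℝ) (ψ : Y → ℝ), (∀ᵐ x ∂P, ∀ᵐ y ∂Q, Φ (x, y) ≤ φ x + ψ y) →
      ∀ᵐ x ∂P, ∀ᵐ y ∂Q, alow x + blow y ≤ φ x + ψ y := by
    intro φ ψ hf
    filter_upwards [hf, hlbound] with x h1 h2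
    filter_upwards [h1, h2] with y h3 h4
    linarith
  have hSlb : ∀ v ∈ S, ∫ x, alow x ∂P + ∫ y, blow y ∂Q ≤ v := by
    rintro v ⟨φ, ψ, ⟨hφm, hψm, hφi, hψi, hfe⟩, rfl⟩
    have step1 : ∀ᵐ x ∂P, alow x + ∫ y, blow y ∂Q ≤ φ x + ∫ y, ψ y ∂Q := by
      filter_upwards [lowfeas φ ψ hfe] with x hx
      have hi1 : Integrable (fun y => alow x + blow y) Q := (integrable_const (alow x)).add hblow
      have hi2 : Integrable (fun y => φ x + ψ y) Q := (integrable_const (φ x)).add hψi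
      have hmono := integral_mono_ae hi1 hi2 hx
      rw [integral_add (integrable_const _) hblow, integral_add (integrable_const _) hψi] at hmono
      simpa using hmono
    have hi3 : Integrable (fun x => alow x + ∫ y, blow y ∂Q) P := halow.add (integrable_const _)
    have hi4 : Integrable (fun x => φ x + ∫ y, ψ y ∂Q) P := hφi.add (integrable_const _)
    have hmono2 := integral_mono_ae hi3 hi4 step1
    rw [integral_add halow (integrable_const _), integral_add hφi (integrable_const _)] at hmono2
    simpa using hmono2
  have hSbdd : BddBelow S := ⟨_, fun v hv => hSlb v hv⟩
  set I := sInf S with hIdef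
  have hIle : ∀ (φ : X → ℝ) (ψ : Y → ℝ), Feas φ ψ → I ≤ ∫ x, φ x ∂P + ∫ y, ψ y ∂Q :=
    fun φ ψ h => csInf_le hSbdd ⟨φ, ψ, h, rfl⟩
  have hswap : ∀ (φ : X → ℝ) (ψ : Y → ℝ), Measurable φ → Measurable ψ →
      (∀ᵐ x ∂P, ∀ᵐ y ∂Q, alow x + blow y ≤ φ x + ψ y) →
      ∀ᵐ y ∂Q, ∀ᵐ x ∂P, alow x + blow y ≤ φ x + ψ y := by
    intro φ ψ hφm hψm h
    have hms : MeasurableSet {z : X × Y | alow z.1 + blow z.2 ≤ φ z.1 + ψ z.2} :=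
      measurableSet_le ((halowm.comp measurable_fst).add (hblowm.comp measurable_snd))
        ((hφm.comp measurable_fst).add (hψm.comp measurable_snd))
    exact (MeasureTheory.Measure.ae_ae_comm (p := fun x y => alow x + blow y ≤ φ x + ψ y) hms).1 h
  set ε : ℕ → ℝ := fun n => (2⁻¹ : ℝ) ^ n with hεdef
  have hεpos : ∀ n, 0 < ε n := fun n => pow_pos (by norm_num) n
  have hεle1 : ∀ n, ε n ≤ 1 := fun n => pow_le_one₀ (by norm_num) (by norm_num)
  set A : X → ℝ := fun x => alow x - (I + 1 - ∫ y, blow y ∂Q) with hAdef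
  set B : Y → ℝ := fun y => blow y + ∫ x, alow x ∂P with hBdef
  have hAm : Measurable A := halowm.sub measurable_const
  have hBm : Measurable B := hblowm.add measurable_const
  have hAi : Integrable A P := halow.sub (integrable_const _)
  have hBi : Integrable B Q := hblow.add (integrable_const _)
  have main_n : ∀ n : ℕ, ∃ (φ : X → ℝ) (ψ : Y → ℝ), Feas φ ψ ∧
      ∫ x, φ x ∂P + ∫ y, ψ y ∂Q ≤ I + ε n ∧ (∀ x, A x ≤ φ x) ∧ (∀ y, B y ≤ ψ y) := by
    intro n
    obtain ⟨v, hvS, hvlt⟩ :=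
      exists_lt_of_csInf_lt hSne (show sInf S < I + ε n by rw [← hIdef]; linarith [hεpos n])
    obtain ⟨φ₀, ψ₀, ⟨hφ₀m, hψ₀m, hφ₀i, hψ₀i, hfe₀⟩, hveq⟩ := hvS
    set c := ∫ x, φ₀ x ∂P with hcdef
    set φ₁ : X → ℝ := fun x => φ₀ x - c with hφ₁def
    set ψ₁ : Y → ℝ := fun y => ψ₀ y + c with hψ₁def
    have hφ₁m : Measurable φ₁ := hφ₀m.sub measurable_const
    have hψ₁m : Measurable ψ₁ := hψ₀m.add measurable_const
    have hφ₁i : Integrable φ₁ P := hφ₀i.sub (integrable_const c)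
    have hψ₁i : Integrable ψ₁ Q := hψ₀i.add (integrable_const c)
    have hfe₁ : ∀ᵐ x ∂P, ∀ᵐ y ∂Q, Φ (x, y) ≤ φ₁ x + ψ₁ y := by
      filter_upwards [hfe₀] with x h1
      filter_upwards [h1] with y h2
      simp only [hφ₁def, hψ₁def]
      linarith
    have hφ₁int : ∫ x, φ₁ x ∂P = 0 := by
      simp only [hφ₁def]
      rw [integral_sub hφ₀i (integrable_const c)]
      simp [hcdef]
    have hψ₁int : ∫ y, ψ₁ y ∂Q = ∫ y, ψ₀ y ∂Q + c := by
      simp only [hψ₁def]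
      rw [integral_add hψ₀i (integrable_const c)]
      simp
    have hval₁ : ∫ x, φ₁ x ∂P + ∫ y, ψ₁ y ∂Q ≤ I + ε n := by
      rw [hφ₁int, hψ₁int]
      rw [hcdef]
      linarith [hvlt, hveq.symm.le, hveq.le]
    have hlf := lowfeas φ₁ ψ₁ hfe₁
    have hsub1 : Integrable (fun x => φ₁ x - alow x) P := hφ₁i.sub halow
    obtain ⟨x₀, hx₀, hx₀le⟩ := exists_good (μ := P) hsub1 hlf
    have hintx : ∫ x, (φ₁ x - alow x) ∂P = - ∫ x, alow x ∂P := by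
      rw [integral_sub hφ₁i halow, hφ₁int]
      ring
    rw [hintx] at hx₀le
    have hψfloor : ∀ᵐ y ∂Q, B y ≤ ψ₁ y := by
      filter_upwards [hx₀] with y hy
      simp only [hBdef]
      linarith
    have hswapped := hswap φ₁ ψ₁ hφ₁m hψ₁m hlf
    have hsub2 : Integrable (fun y => ψ₁ y - blow y) Q := hψ₁i.sub hblow
    obtain ⟨y₀, hy₀, hy₀le⟩ := exists_good (μ := Q) hsub2 hswapped
    have hinty : ∫ y, (ψ₁ y - blow y) ∂Q ≤ I + 1 - ∫ y, blow y ∂Q := by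
      rw [integral_sub hψ₁i hblow]
      have := hεle1 n
      linarith [hval₁, hφ₁int]
    have hy₀le' := le_trans hy₀le hinty
    have hφfloor : ∀ᵐ x ∂P, A x ≤ φ₁ x := by
      filter_upwards [hy₀] with x hx
      simp only [hAdef]
      linarith
    refine ⟨fun x => max (φ₁ x) (A x), fun y => max (ψ₁ y) (B y),
      ⟨hφ₁m.max hAm, hψ₁m.max hBm, ?_, ?_, ?_⟩, ?_,
      fun x => le_max_right _ _, fun y => le_max_right _ _⟩
    · have := hφ₁i.sup hAi
      exact this
    · have := hψ₁i.sup hBi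
      exact this
    · filter_upwards [hfe₁] with x h1
      filter_upwards [h1] with y h2
      exact le_trans h2 (add_le_add (le_max_left _ _) (le_max_left _ _))
    · have e1 : ∫ x, max (φ₁ x) (A x) ∂P = ∫ x, φ₁ x ∂P :=
        integral_congr_ae (hφfloor.mono fun x hx => max_eq_left hx)
      have e2 : ∫ y, max (ψ₁ y) (B y) ∂Q = ∫ y, ψ₁ y ∂Q :=
        integral_congr_ae (hψfloor.mono fun y hy => max_eq_left hy)
      rw [e1, e2]
      exact hval₁
  choose φs ψs hFeas hval hAfl hBfl using main_n
  have hφsm : ∀ n, Measurable (φs n) := fun n => (hFeas n).1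
  have hψsm : ∀ n, Measurable (ψs n) := fun n => (hFeas n).2.1
  have hφsi : ∀ n, Integrable (φs n) P := fun n => (hFeas n).2.2.1
  have hψsi : ∀ n, Integrable (ψs n) Q := fun n => (hFeas n).2.2.2.1
  have hfes : ∀ n, ∀ᵐ x ∂P, ∀ᵐ y ∂Q, Φ (x, y) ≤ φs n x + ψs n y := fun n => (hFeas n).2.2.2.2
  have hum : ∀ m j, Measurable (itInf φs m j) := fun m j => itInf_measurable hφsm m j
  have hwm : ∀ m j, Measurable (itSup ψs m j) := fun m j => itSup_measurable hψsm m j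
  have hui : ∀ m j, Integrable (itInf φs m j) P := fun m j => itInf_integrable hφsi m j
  have hwi : ∀ m j, Integrable (itSup ψs m j) Q := fun m j => itSup_integrable hψsi m j
  have huA : ∀ m j x, A x ≤ itInf φs m j x := fun m j x => le_itInf hAfl m j x
  have hwB : ∀ m j y, B y ≤ itSup ψs m j y :=
    fun m j y => le_trans (hBfl m y) (le_itSup ψs m j y)
  have hεsucc : ∀ k, ε k = 2 * ε (k + 1) := by
    intro k
    simp only [hεdef, pow_succ]
    ring
  have key : ∀ m j, (∀ᵐ x ∂P, ∀ᵐ y ∂Q, Φ (x, y) ≤ itInf φs m j x + itSup ψs m j y) ∧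
      ∫ x, itInf φs m j x ∂P + ∫ y, itSup ψs m j y ∂Q ≤ I + 2 * ε m - ε (m + j) := by
    intro m j
    induction j with
    | zero =>
      refine ⟨hfes m, ?_⟩
      have h1 := hval m
      have h2 : ∫ x, itInf φs m 0 x ∂P + ∫ y, itSup ψs m 0 y ∂Q
          = ∫ x, φs m x ∂P + ∫ y, ψs m y ∂Q := rfl
      rw [h2, Nat.add_zero]
      linarith
    | succ j ih =>
      have hidx : m + (j + 1) = m + j + 1 := by omega
      have hmaxi : Integrable (fun x => max (itInf φs m j x) (φs (m + j + 1) x)) P := by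
        have := (hui m j).sup (hφsi (m + j + 1))
        exact this
      have hmini : Integrable (fun y => min (itSup ψs m j y) (ψs (m + j + 1) y)) Q := by
        have := (hwi m j).inf (hψsi (m + j + 1))
        exact this
      constructor
      · have hcomb := feas_inf_sup (P := P) (Q := Q) ih.1 (hfes (m + j + 1))
        filter_upwards [hcomb] with x h1
        filter_upwards [h1] with y h2
        rw [itInf_succ, itSup_succ]
        exact h2
      · have hcompfeas := feas_sup_inf (P := P) (Q := Q) ih.1 (hfes (m + j + 1))
        have hcomp : I ≤ ∫ x, max (itInf φs m j x) (φs (m + j + 1) x) ∂P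
            + ∫ y, min (itSup ψs m j y) (ψs (m + j + 1) y) ∂Q :=
          hIle _ _ ⟨(hum m j).max (hφsm _), (hwm m j).min (hψsm _), hmaxi, hmini, hcompfeas⟩
        have e1 : ∫ x, itInf φs m (j + 1) x ∂P
            + ∫ x, max (itInf φs m j x) (φs (m + j + 1) x) ∂P
            = ∫ x, itInf φs m j x ∂P + ∫ x, φs (m + j + 1) x ∂P := by
          rw [← integral_add (hui m (j + 1)) hmaxi, ← integral_add (hui m j) (hφsi _)]
          refine integral_congr_ae (ae_of_all _ fun x => ?_)
          beta_reduce
          rw [itInf_succ]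
          exact min_add_max _ _
        have e2 : ∫ y, itSup ψs m (j + 1) y ∂Q
            + ∫ y, min (itSup ψs m j y) (ψs (m + j + 1) y) ∂Q
            = ∫ y, itSup ψs m j y ∂Q + ∫ y, ψs (m + j + 1) y ∂Q := by
          rw [← integral_add (hwi m (j + 1)) hmini, ← integral_add (hwi m j) (hψsi _)]
          refine integral_congr_ae (ae_of_all _ fun y => ?_)
          beta_reduce
          rw [itSup_succ, add_comm]
          exact min_add_max _ _
        have hv := hval (m + j + 1)
        have hε := hεsucc (m + j)
        have hih := ih.2
        rw [hidx]
        linarith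
  set hh : ℕ → X → ℝ := fun m x => ⨅ j, itInf φs m j x with hhdef
  set SS : ℕ → Y → ℝ≥0∞ := fun m y => ⨆ j, ENNReal.ofReal (itSup ψs m j y - B y) with hSSdef
  set G : ℕ → Y → ℝ := fun m y => B y + (SS m y).toReal with hGdef
  have hbdB : ∀ m x, BddBelow (Set.range fun j => itInf φs m j x) := by
    intro m x
    exact ⟨A x, by rintro _ ⟨j, rfl⟩; exact huA m j x⟩
  have hhA : ∀ m x, A x ≤ hh m x := fun m x => le_ciInf fun j => huA m j x
  have hhle : ∀ m j x, hh m x ≤ itInf φs m j x := fun m j x => ciInf_le (hbdB m x) j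
  have hhm : ∀ m, Measurable (hh m) := fun m => Measurable.iInf (fun j => hum m j)
  have hhi : ∀ m, Integrable (hh m) P := by
    intro m
    refine Integrable.mono' ((hui m 0).abs.add hAi.abs) (hhm m).aestronglyMeasurable
      (ae_of_all _ fun x => ?_)
    simp only [Pi.add_apply]
    beta_reduce
    rw [Real.norm_eq_abs, abs_le]
    constructor
    · linarith [hhA m x, neg_abs_le (A x), abs_nonneg (itInf φs m 0 x)]
    · linarith [hhle m 0 x, le_abs_self (itInf φs m 0 x), abs_nonneg (A x)]
  have hwmono : ∀ m y, Monotone fun j => itSup ψs m j y := fun m y => itSup_mono ψs m y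
  have hSSm : ∀ m, Measurable (SS m) :=
    fun m => Measurable.iSup (fun j => ((hwm m j).sub hBm).ennreal_ofReal)
  have hSSlint : ∀ m, ∫⁻ y, SS m y ∂Q
      = ⨆ j, ENNReal.ofReal (∫ y, (itSup ψs m j y - B y) ∂Q) := by
    intro m
    simp only [hSSdef]
    rw [lintegral_iSup (f := fun j y => ENNReal.ofReal (itSup ψs m j y - B y)) (fun j => ((hwm m j).sub hBm).ennreal_ofReal)
      (fun j k hjk y => ENNReal.ofReal_le_ofReal (by have := hwmono m y hjk; linarith))]
    congr 1
    funext j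
    exact (ofReal_integral_eq_lintegral_ofReal ((hwi m j).sub hBi)
      (ae_of_all _ fun y => sub_nonneg.2 (hwB m j y))).symm
  have hdjle : ∀ m j, ∫ y, (itSup ψs m j y - B y) ∂Q
      ≤ I + 2 * ε m - ∫ x, A x ∂P - ∫ y, B y ∂Q := by
    intro m j
    rw [integral_sub (hwi m j) hBi]
    have h1 := (key m j).2
    have h2 : ∫ x, A x ∂P ≤ ∫ x, itInf φs m j x ∂P :=
      integral_mono hAi (hui m j) (fun x => huA m j x)
    linarith [hεpos (m + j)]
  have hSSfin : ∀ m, ∫⁻ y, SS m y ∂Q ≠ ∞ := by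
    intro m
    rw [hSSlint m]
    exact ne_of_lt (lt_of_le_of_lt
      (iSup_le fun j => ENNReal.ofReal_le_ofReal (hdjle m j)) ENNReal.ofReal_lt_top)
  have hSSaefin : ∀ m, ∀ᵐ y ∂Q, SS m y < ∞ := fun m => MeasureTheory.ae_lt_top (hSSm m) (hSSfin m)
  have hGm : ∀ m, Measurable (G m) := fun m => hBm.add (hSSm m).ennreal_toReal
  have hGi : ∀ m, Integrable (G m) Q := fun m => hBi.add
    (integrable_toReal_of_lintegral_ne_top (hSSm m).aemeasurable (hSSfin m))
  have hGB : ∀ m y, B y ≤ G m y := fun m y => le_add_of_nonneg_right ENNReal.toReal_nonneg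
  have hwG : ∀ m, ∀ᵐ y ∂Q, ∀ j, itSup ψs m j y ≤ G m y := by
    intro m
    filter_upwards [hSSaefin m] with y hy
    intro j
    have h1 : ENNReal.ofReal (itSup ψs m j y - B y) ≤ SS m y :=
      le_iSup (fun j => ENNReal.ofReal (itSup ψs m j y - B y)) j
    have h2 := (ENNReal.ofReal_le_iff_le_toReal hy.ne).1 h1
    simp only [hGdef]
    linarith
  have hGtend : ∀ m, ∀ᵐ y ∂Q, Tendsto (fun j => itSup ψs m j y) atTop (𝓝 (G m y)) := by
    intro m
    filter_upwards [hSSaefin m, hwG m] with y hy hle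
    have hbd : BddAbove (Set.range fun j => itSup ψs m j y - B y) := by
      refine ⟨(SS m y).toReal, ?_⟩
      rintro _ ⟨j, rfl⟩
      have h2 := (ENNReal.ofReal_le_iff_le_toReal hy.ne).1
        (le_iSup (fun j => ENNReal.ofReal (itSup ψs m j y - B y)) j)
      exact h2
    have hset : (SS m y).toReal = ⨆ j, (itSup ψs m j y - B y) := by
      show (⨆ j, ENNReal.ofReal (itSup ψs m j y - B y)).toReal = _
      exact toReal_iSup_ofReal hbd (sub_nonneg.2 (hwB m 0 y))
    have htend : Tendsto (fun j => itSup ψs m j y - B y) atTop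
        (𝓝 (⨆ j, (itSup ψs m j y - B y))) :=
      tendsto_atTop_ciSup (fun j k hjk => by have := hwmono m y hjk; linarith) hbd
    have hGy : G m y = B y + ⨆ j, (itSup ψs m j y - B y) := by
      simp only [hGdef]
      rw [hset]
    rw [hGy]
    exact (htend.const_add (B y)).congr (fun j => by ring)
  have hGval : ∀ m, ∫ y, G m y ∂Q
      = ∫ y, B y ∂Q + ⨆ j, ∫ y, (itSup ψs m j y - B y) ∂Q := by
    intro m
    simp only [hGdef]
    rw [integral_add hBi (integrable_toReal_of_lintegral_ne_top (hSSm m).aemeasurable (hSSfin m))]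
    congr 1
    rw [integral_toReal (hSSm m).aemeasurable (hSSaefin m), hSSlint m]
    refine toReal_iSup_ofReal ⟨I + 2 * ε m - ∫ x, A x ∂P - ∫ y, B y ∂Q, ?_⟩
      (integral_nonneg fun y => sub_nonneg.2 (hwB m 0 y))
    rintro _ ⟨j, rfl⟩
    exact hdjle m j
  have hvalm : ∀ m, ∫ x, hh m x ∂P + ∫ y, G m y ∂Q ≤ I + 2 * ε m := by
    intro m
    rw [hGval m]
    have hsup : (⨆ j, ∫ y, (itSup ψs m j y - B y) ∂Q)
        ≤ I + 2 * ε m - ∫ x, hh m x ∂P - ∫ y, B y ∂Q := by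
      refine ciSup_le fun j => ?_
      rw [integral_sub (hwi m j) hBi]
      have h1 := (key m j).2
      have h2 : ∫ x, hh m x ∂P ≤ ∫ x, itInf φs m j x ∂P :=
        integral_mono (hhi m) (hui m j) (fun x => hhle m j x)
      linarith [hεpos (m + j)]
    linarith
  have hGfeas : ∀ m, ∀ᵐ x ∂P, ∀ᵐ y ∂Q, Φ (x, y) ≤ hh m x + G m y := by
    intro m
    have hj : ∀ᵐ x ∂P, ∀ j, ∀ᵐ y ∂Q, Φ (x, y) ≤ itInf φs m j x + itSup ψs m j y :=
      ae_all_iff.2 fun j => (key m j).1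
    filter_upwards [hj] with x hx
    filter_upwards [ae_all_iff.2 hx, hwG m] with y h1 h2
    have h3 : ∀ j, Φ (x, y) - G m y ≤ itInf φs m j x := fun j => by linarith [h1 j, h2 j]
    have h4 := le_ciInf h3
    simp only [hhdef]
    linarith
  have hhmono : ∀ x, Monotone fun m => hh m x := by
    intro x
    refine monotone_nat_of_le_succ fun m => ?_
    refine le_ciInf fun j => ?_
    have h1 : hh m x ≤ itInf φs m (j + 1) x := hhle m (j + 1) x
    rw [itInf_shift] at h1
    exact le_trans h1 (min_le_right _ _)
  have hSSanti : ∀ y, Antitone fun m => SS m y := by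
    intro y
    refine antitone_nat_of_succ_le fun m => ?_
    refine iSup_le fun j => ?_
    have h1 : itSup ψs (m + 1) j y ≤ itSup ψs m (j + 1) y := by
      rw [itSup_shift]
      exact le_max_right _ _
    exact le_trans (ENNReal.ofReal_le_ofReal (by linarith))
      (le_iSup (fun j => ENNReal.ofReal (itSup ψs m j y - B y)) (j + 1))
  set Shat : X → ℝ≥0∞ := fun x => ⨆ m, ENNReal.ofReal (hh m x - A x) with hShatdef
  set φstar : X → ℝ := fun x => A x + (Shat x).toReal with hφstardef
  set T : Y → ℝ≥0∞ := fun y => ⨅ m, SS m y with hTdef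
  set ψstar : Y → ℝ := fun y => B y + (T y).toReal with hψstardef
  have hIB : ∀ m, ∫ y, B y ∂Q ≤ ∫ y, G m y ∂Q := fun m => integral_mono hBi (hGi m) (hGB m)
  have hhub : ∀ m, ∫ x, hh m x ∂P ≤ I + 2 - ∫ y, B y ∂Q := by
    intro m
    linarith [hvalm m, hIB m, hεle1 m, hεpos m]
  have hcmmono : ∀ m k, m ≤ k → ∫ x, hh m x ∂P ≤ ∫ x, hh k x ∂P :=
    fun m k hmk => integral_mono (hhi m) (hhi k) (fun x => hhmono x hmk)
  have hShatm : Measurable Shat := Measurable.iSup (fun m => ((hhm m).sub hAm).ennreal_ofReal)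
  have hShatlint : ∫⁻ x, Shat x ∂P = ⨆ m, ENNReal.ofReal (∫ x, (hh m x - A x) ∂P) := by
    simp only [hShatdef]
    rw [lintegral_iSup (f := fun m x => ENNReal.ofReal (hh m x - A x)) (fun m => ((hhm m).sub hAm).ennreal_ofReal)
      (fun m k hmk x => ENNReal.ofReal_le_ofReal (by have := hhmono x hmk; linarith))]
    congr 1
    funext m
    exact (ofReal_integral_eq_lintegral_ofReal ((hhi m).sub hAi)
      (ae_of_all _ fun x => sub_nonneg.2 (hhA m x))).symm
  have hcmle : ∀ m, ∫ x, (hh m x - A x) ∂P ≤ I + 2 - ∫ y, B y ∂Q - ∫ x, A x ∂P := by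
    intro m
    rw [integral_sub (hhi m) hAi]
    linarith [hhub m]
  have hShatfin : ∫⁻ x, Shat x ∂P ≠ ∞ := by
    rw [hShatlint]
    exact ne_of_lt (lt_of_le_of_lt
      (iSup_le fun m => ENNReal.ofReal_le_ofReal (hcmle m)) ENNReal.ofReal_lt_top)
  have hShataefin : ∀ᵐ x ∂P, Shat x < ∞ := MeasureTheory.ae_lt_top hShatm hShatfin
  have hφstarm : Measurable φstar := hAm.add hShatm.ennreal_toReal
  have hφstari : Integrable φstar P :=
    hAi.add (integrable_toReal_of_lintegral_ne_top hShatm.aemeasurable hShatfin)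
  have hφstarval : ∫ x, φstar x ∂P = ∫ x, A x ∂P + ⨆ m, ∫ x, (hh m x - A x) ∂P := by
    simp only [hφstardef]
    rw [integral_add hAi (integrable_toReal_of_lintegral_ne_top hShatm.aemeasurable hShatfin)]
    congr 1
    rw [integral_toReal hShatm.aemeasurable hShataefin, hShatlint]
    refine toReal_iSup_ofReal ⟨I + 2 - ∫ y, B y ∂Q - ∫ x, A x ∂P, ?_⟩
      (integral_nonneg fun x => sub_nonneg.2 (hhA 0 x))
    rintro _ ⟨m, rfl⟩
    exact hcmle m
  have hTm : Measurable T := Measurable.iInf (fun m => hSSm m)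
  have hψstarm : Measurable ψstar := hBm.add hTm.ennreal_toReal
  have hTleS : ∀ m y, T y ≤ SS m y := fun m y => iInf_le (fun m => SS m y) m
  have hψstari : Integrable ψstar Q := by
    refine hBi.add ?_
    refine Integrable.mono'
      (integrable_toReal_of_lintegral_ne_top (hSSm 0).aemeasurable (hSSfin 0))
      hTm.ennreal_toReal.aestronglyMeasurable ?_
    filter_upwards [hSSaefin 0] with y hy
    rw [Real.norm_eq_abs, abs_of_nonneg ENNReal.toReal_nonneg]
    exact ENNReal.toReal_mono hy.ne (hTleS 0 y)
  have hψstarleG : ∀ m, ∀ᵐ y ∂Q, ψstar y ≤ G m y := by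
    intro m
    filter_upwards [hSSaefin m] with y hy
    simp only [hψstardef, hGdef]
    exact add_le_add le_rfl (ENNReal.toReal_mono hy.ne (hTleS m y))
  have hψstarint : ∀ m, ∫ y, ψstar y ∂Q ≤ ∫ y, G m y ∂Q :=
    fun m => integral_mono_ae hψstari (hGi m) (hψstarleG m)
  have hfinval : ∫ x, φstar x ∂P + ∫ y, ψstar y ∂Q ≤ I := by
    have hbdd : BddAbove (Set.range fun m => ∫ x, (hh m x - A x) ∂P) :=
      ⟨I + 2 - ∫ y, B y ∂Q - ∫ x, A x ∂P, by rintro _ ⟨m, rfl⟩; exact hcmle m⟩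
    have hmono : Monotone fun m => ∫ x, (hh m x - A x) ∂P := by
      intro m k hmk
      beta_reduce
      rw [integral_sub (hhi m) hAi, integral_sub (hhi k) hAi]
      linarith [hcmmono m k hmk]
    have htendL : Tendsto (fun m => ∫ x, (hh m x - A x) ∂P) atTop
        (𝓝 (⨆ m, ∫ x, (hh m x - A x) ∂P)) := tendsto_atTop_ciSup hmono hbdd
    have hbound : ∀ m, ∫ x, (hh m x - A x) ∂P
        ≤ I + 2 * ε m - ∫ y, ψstar y ∂Q - ∫ x, A x ∂P := by
      intro m
      rw [integral_sub (hhi m) hAi]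
      linarith [hvalm m, hψstarint m]
    have htendR : Tendsto (fun m => I + 2 * ε m - ∫ y, ψstar y ∂Q - ∫ x, A x ∂P) atTop
        (𝓝 (I + 2 * 0 - ∫ y, ψstar y ∂Q - ∫ x, A x ∂P)) := by
      refine Tendsto.sub (Tendsto.sub (tendsto_const_nhds.add ?_) tendsto_const_nhds)
        tendsto_const_nhds
      have h2 : Tendsto (fun m : ℕ => (2⁻¹ : ℝ) ^ m) atTop (𝓝 0) :=
        tendsto_pow_atTop_nhds_zero_of_lt_one (by norm_num) (by norm_num)
      have h3 := h2.const_mul (2 : ℝ)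
      simpa [hεdef] using h3
    have hle := le_of_tendsto_of_tendsto' htendL htendR hbound
    rw [hφstarval]
    linarith [hle]
  have hfeasfinal : ∀ᵐ x ∂P, ∀ᵐ y ∂Q, Φ (x, y) ≤ φstar x + ψstar y := by
    filter_upwards [hShataefin, ae_all_iff.2 hGfeas] with x hxfin hx
    filter_upwards [ae_all_iff.2 hx, hSSaefin 0] with y h1 h2
    have hbdx : BddAbove (Set.range fun m => hh m x - A x) := by
      refine ⟨(Shat x).toReal, ?_⟩
      rintro _ ⟨m, rfl⟩
      exact (ENNReal.ofReal_le_iff_le_toReal hxfin.ne).1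
        (le_iSup (fun m => ENNReal.ofReal (hh m x - A x)) m)
    have hφx : φstar x = A x + ⨆ m, (hh m x - A x) := by
      simp only [hφstardef]
      congr 1
      show (⨆ m, ENNReal.ofReal (hh m x - A x)).toReal = _
      exact toReal_iSup_ofReal hbdx (sub_nonneg.2 (hhA 0 x))
    have hmonx : Monotone fun m => hh m x - A x := by
      intro m k hmk
      beta_reduce
      have := hhmono x hmk
      linarith
    have htx : Tendsto (fun m => hh m x) atTop (𝓝 (φstar x)) := by
      rw [hφx]
      exact ((tendsto_atTop_ciSup hmonx hbdx).const_add (A x)).congr (fun m => by ring)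
    have hty : Tendsto (fun m => G m y) atTop (𝓝 (ψstar y)) := by
      have h3 : Tendsto (fun m => SS m y) atTop (𝓝 (T y)) := tendsto_atTop_iInf (hSSanti y)
      have hTfin : T y ≠ ∞ := ne_of_lt (lt_of_le_of_lt (hTleS 0 y) h2)
      have h4 : Tendsto (fun m => (SS m y).toReal) atTop (𝓝 (T y).toReal) :=
        (ENNReal.tendsto_toReal hTfin).comp h3
      have h5 := h4.const_add (B y)
      simpa only [hGdef, hψstardef] using h5
    exact ge_of_tendsto (htx.add hty) (Filter.Eventually.of_forall fun m => h1 m)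
  refine ⟨φstar, ψstar, hφstarm, hψstarm, hφstari, hψstari, hfeasfinal, ?_⟩
  intro φ' ψ' hφ'm hψ'm hφ'i hψ'i hfe'
  exact le_trans hfinval (hIle φ' ψ' ⟨hφ'm, hψ'm, hφ'i, hψ'i, hfe'⟩)




end MKDualAux

open MKDualAux

/-- Existence of dual optimizers. -/
theorem mk_dual_attained
    {d d' : ℕ} (𝒳 : Set (Fin d → ℝ)) (𝒴 : Set (Fin d' → ℝ))
    (h𝒳 : IsClosed 𝒳) (h𝒴 : IsClosed 𝒴)
    (P : Measure (Fin d → ℝ)) (Q : Measure (Fin d' → ℝ))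
    [IsProbabilityMeasure P] [IsProbabilityMeasure Q]
    (hP : P 𝒳ᶜ = 0) (hQ : Q 𝒴ᶜ = 0)
    (Φ : (Fin d → ℝ) × (Fin d' → ℝ) → ℝ)
    (hΦusc : UpperSemicontinuousOn Φ (𝒳 ×ˢ 𝒴))
    (abar : (Fin d → ℝ) → ℝ) (bbar : (Fin d' → ℝ) → ℝ)
    (habar : Integrable abar P) (hbbar : Integrable bbar Q)
    (hbound : ∀ x ∈ 𝒳, ∀ y ∈ 𝒴, Φ (x, y) ≤ abar x + bbar y)
    (alow : (Fin d → ℝ) → ℝ) (blow : (Fin d' → ℝ) → ℝ)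
    (halow : Integrable alow P) (hblow : Integrable blow Q)
    (hlbound : ∀ x ∈ 𝒳, ∀ y ∈ 𝒴, alow x + blow y ≤ Φ (x, y)) :
    ∃ (φ : (Fin d → ℝ) → ℝ) (ψ : (Fin d' → ℝ) → ℝ),
      Measurable φ ∧ Measurable ψ ∧ Integrable φ P ∧ Integrable ψ Q ∧
      (∀ᵐ x ∂P, ∀ᵐ y ∂Q, Φ (x, y) ≤ φ x + ψ y) ∧
      ∀ (φ' : (Fin d → ℝ) → ℝ) (ψ' : (Fin d' → ℝ) → ℝ),
        Measurable φ' → Measurable ψ' → Integrable φ' P → Integrable ψ' Q →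
        (∀ᵐ x ∂P, ∀ᵐ y ∂Q, Φ (x, y) ≤ φ' x + ψ' y) →
        ∫ x, φ x ∂P + ∫ y, ψ y ∂Q ≤ ∫ x, φ' x ∂P + ∫ y, ψ' y ∂Q := by
  have hXae : ∀ᵐ x ∂P, x ∈ 𝒳 := by
    rw [ae_iff]
    exact hP
  have hYae : ∀ᵐ y ∂Q, y ∈ 𝒴 := by
    rw [ae_iff]
    exact hQ
  -- measurable modifications of the four bounds
  set abar' := habar.aemeasurable.mk abar with habar'def
  set bbar' := hbbar.aemeasurable.mk bbar with hbbar'def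
  set alow' := halow.aemeasurable.mk alow with halow'def
  set blow' := hblow.aemeasurable.mk blow with hblow'def
  have eabar := habar.aemeasurable.ae_eq_mk
  have ebbar := hbbar.aemeasurable.ae_eq_mk
  have ealow := halow.aemeasurable.ae_eq_mk
  have eblow := hblow.aemeasurable.ae_eq_mk
  refine dual_attained P Q Φ abar' bbar' (habar.congr eabar) (hbbar.congr ebbar)
    (habar.aemeasurable.measurable_mk) (hbbar.aemeasurable.measurable_mk)
    alow' blow' (halow.congr ealow) (hblow.congr eblow)
    (halow.aemeasurable.measurable_mk) (hblow.aemeasurable.measurable_mk) ?_ ?_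
  · filter_upwards [hXae, eabar] with x hx hax
    filter_upwards [hYae, ebbar] with y hy hby
    show Φ (x, y) ≤ AEMeasurable.mk abar habar.aemeasurable x + AEMeasurable.mk bbar hbbar.aemeasurable y
    rw [← hax, ← hby]
    exact hbound x hx y hy
  · filter_upwards [hXae, ealow] with x hx hax
    filter_upwards [hYae, eblow] with y hy hby
    show AEMeasurable.mk alow halow.aemeasurable x + AEMeasurable.mk blow hblow.aemeasurable y ≤ Φ (x, y)
    rw [← hax, ← hby]
    exact hlbound x hx y hy
end

section
/- Joint optimality criterion via the support condition: assume strong duality holds (the primal supremum equals the dual infimum and both are finite), Φ is continuous, and φ, ψ are continuous functions with φ(x) + ψ(y) ≥ Φ(x,y) for all x, y. Let π ∈ M(P,Q). Then π is an optimal coupling and (φ, ψ) is a dual minimizer if and only if the support of π is contained in the set {(x,y) ∈ 𝒳 × 𝒴 : φ(x) + ψ(y) = Φ(x,y)}. -/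
open MeasureTheory

/-- The (topological) support of a measure: the set of points all of whose open
neighborhoods have positive measure; equivalently, the smallest closed set of full
measure (for measures on second-countable spaces). -/
def measureSupport {α : Type*} [TopologicalSpace α] [MeasurableSpace α]
    (μ : Measure α) : Set α :=
  {z | ∀ U : Set α, IsOpen U → z ∈ U → μ U ≠ 0}

lemma compl_measureSupport_null {α : Type*} [TopologicalSpace α]
    [SecondCountableTopology α] [MeasurableSpace α]
    (μ : Measure α) : μ (measureSupport μ)ᶜ = 0 := by
  set S : Set (Set α) := {U | IsOpen U ∧ μ U = 0} with hS
  obtain ⟨T, hTc, hTS, hTU⟩ := TopologicalSpace.isOpen_sUnion_countable S (fun s hs => hs.1)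
  have hcompl : (measureSupport μ)ᶜ = ⋃₀ S := by
    ext z
    simp only [measureSupport, Set.mem_compl_iff, Set.mem_setOf_eq, Set.mem_sUnion, hS]
    constructor
    · intro h
      push_neg at h
      obtain ⟨U, hU, hzU, hμU⟩ := h
      exact ⟨U, ⟨hU, hμU⟩, hzU⟩
    · intro ⟨U, ⟨hU, hμU⟩, hzU⟩ h
      exact h U hU hzU hμU
  rw [hcompl, ← hTU]
  exact (measure_sUnion_null_iff hTc).2 fun s hs => (hTS hs).2

/-- Joint optimality criterion via the support condition: assuming strong duality
(common finite value `v` of primal supremum and dual infimum), with `Φ`, `φ`, `ψ`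
continuous and `(φ, ψ)` dual-feasible, a coupling `π` is primal-optimal and `(φ, ψ)`
is dual-optimal if and only if the support of `π` is contained in
`{(x,y) ∈ 𝒳 × 𝒴 : φ(x) + ψ(y) = Φ(x,y)}`. -/
theorem mk_joint_optimality_support
    {d d' : ℕ} (𝒳 : Set (Fin d → ℝ)) (𝒴 : Set (Fin d' → ℝ))
    (h𝒳 : IsClosed 𝒳) (h𝒴 : IsClosed 𝒴)
    (P : Measure (Fin d → ℝ)) (Q : Measure (Fin d' → ℝ))
    [IsProbabilityMeasure P] [IsProbabilityMeasure Q]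
    (hP : P 𝒳ᶜ = 0) (hQ : Q 𝒴ᶜ = 0)
    (Φ : (Fin d → ℝ) × (Fin d' → ℝ) → ℝ) (hΦcont : Continuous Φ)
    (v : ℝ)
    -- strong duality: v is the primal supremum ...
    (hprimal : IsLUB {w : ℝ | ∃ π' : Measure ((Fin d → ℝ) × (Fin d' → ℝ)),
        IsProbabilityMeasure π' ∧ π'.map Prod.fst = P ∧ π'.map Prod.snd = Q ∧
        Integrable Φ π' ∧ w = ∫ z, Φ z ∂π'} v)
    -- ... and also the dual infimum (both values finite, being the real number v)
    (hdual : IsGLB {w : ℝ | ∃ (φ' : (Fin d → ℝ) → ℝ) (ψ' : (Fin d' → ℝ) → ℝ),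
        Measurable φ' ∧ Measurable ψ' ∧ Integrable φ' P ∧ Integrable ψ' Q ∧
        (∀ x ∈ 𝒳, ∀ y ∈ 𝒴, Φ (x, y) ≤ φ' x + ψ' y) ∧
        w = ∫ x, φ' x ∂P + ∫ y, ψ' y ∂Q} v)
    -- (φ, ψ) is a continuous, integrable, feasible dual pair
    (φ : (Fin d → ℝ) → ℝ) (ψ : (Fin d' → ℝ) → ℝ)
    (hφcont : Continuous φ) (hψcont : Continuous ψ)
    (hφint : Integrable φ P) (hψint : Integrable ψ Q)
    (hfeas : ∀ x ∈ 𝒳, ∀ y ∈ 𝒴, Φ (x, y) ≤ φ x + ψ y)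
    -- π is a coupling of P and Q, with Φ π-integrable
    (π : Measure ((Fin d → ℝ) × (Fin d' → ℝ))) [IsProbabilityMeasure π]
    (hπ₁ : π.map Prod.fst = P) (hπ₂ : π.map Prod.snd = Q) (hΦint : Integrable Φ π) :
    (∫ z, Φ z ∂π = v ∧ ∫ x, φ x ∂P + ∫ y, ψ y ∂Q = v) ↔
      measureSupport π ⊆
        {z : (Fin d → ℝ) × (Fin d' → ℝ) | z.1 ∈ 𝒳 ∧ z.2 ∈ 𝒴 ∧ φ z.1 + ψ z.2 = Φ z} := by
  set S : Set ((Fin d → ℝ) × (Fin d' → ℝ)) :=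
    {z | z.1 ∈ 𝒳 ∧ z.2 ∈ 𝒴 ∧ φ z.1 + ψ z.2 = Φ z} with hSdef
  -- marginal null sets
  have hπ𝒳 : π (Prod.fst ⁻¹' 𝒳ᶜ) = 0 := by
    rw [← Measure.map_apply measurable_fst (h𝒳.measurableSet.compl), hπ₁]; exact hP
  have hπ𝒴 : π (Prod.snd ⁻¹' 𝒴ᶜ) = 0 := by
    rw [← Measure.map_apply measurable_snd (h𝒴.measurableSet.compl), hπ₂]; exact hQ
  have hae𝒳 : ∀ᵐ z ∂π, z.1 ∈ 𝒳 := by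
    rw [ae_iff]; exact hπ𝒳
  have hae𝒴 : ∀ᵐ z ∂π, z.2 ∈ 𝒴 := by
    rw [ae_iff]; exact hπ𝒴
  -- integrability / integral transfers
  have hφP : Integrable φ (π.map Prod.fst) := hπ₁ ▸ hφint
  have hψQ : Integrable ψ (π.map Prod.snd) := hπ₂ ▸ hψint
  have hφfst : Integrable (fun z : (Fin d → ℝ) × (Fin d' → ℝ) => φ z.1) π :=
    (integrable_map_measure hφcont.aestronglyMeasurable measurable_fst.aemeasurable).mp hφP
  have hψsnd : Integrable (fun z : (Fin d → ℝ) × (Fin d' → ℝ) => ψ z.2) π :=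
    (integrable_map_measure hψcont.aestronglyMeasurable measurable_snd.aemeasurable).mp hψQ
  have hiφ : ∫ z, φ z.1 ∂π = ∫ x, φ x ∂P := by
    rw [← hπ₁, integral_map measurable_fst.aemeasurable hφcont.aestronglyMeasurable]
  have hiψ : ∫ z, ψ z.2 ∂π = ∫ y, ψ y ∂Q := by
    rw [← hπ₂, integral_map measurable_snd.aemeasurable hψcont.aestronglyMeasurable]
  constructor
  · rintro ⟨h1, h2⟩
    -- the nonnegative gap function
    set g : (Fin d → ℝ) × (Fin d' → ℝ) → ℝ := fun z => φ z.1 + ψ z.2 - Φ z with hg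
    have hg_int : Integrable g π := (hφfst.add hψsnd).sub hΦint
    have hg_nonneg : 0 ≤ᵐ[π] g := by
      filter_upwards [hae𝒳, hae𝒴] with z hz1 hz2
      simpa [hg] using sub_nonneg.mpr (hfeas z.1 hz1 z.2 hz2)
    have hsum : Integrable (fun z : (Fin d → ℝ) × (Fin d' → ℝ) => φ z.1 + ψ z.2) π :=
      hφfst.add hψsnd
    have hg_zero : ∫ z, g z ∂π = 0 := by
      simp only [hg]
      rw [integral_sub hsum hΦint, integral_add hφfst hψsnd, hiφ, hiψ, h1, h2]
      ring
    have hgae : g =ᵐ[π] 0 := (integral_eq_zero_iff_of_nonneg_ae hg_nonneg hg_int).mp hg_zero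
    have haeS : ∀ᵐ z ∂π, z ∈ S := by
      filter_upwards [hae𝒳, hae𝒴, hgae] with z hz1 hz2 hz3
      refine ⟨hz1, hz2, ?_⟩
      have : φ z.1 + ψ z.2 - Φ z = 0 := hz3
      linarith
    have hScompl : π Sᶜ = 0 := ae_iff.mp haeS
    have hSclosed : IsClosed S := by
      have : S = (Prod.fst ⁻¹' 𝒳) ∩ ((Prod.snd ⁻¹' 𝒴) ∩
          {z : (Fin d → ℝ) × (Fin d' → ℝ) | φ z.1 + ψ z.2 = Φ z}) := by
        ext z; simp [hSdef]
      rw [this]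
      exact (h𝒳.preimage continuous_fst).inter ((h𝒴.preimage continuous_snd).inter
        (isClosed_eq (by fun_prop) hΦcont))
    intro z hz
    by_contra hzS
    exact hz Sᶜ hSclosed.isOpen_compl hzS hScompl
  · intro hsub
    have hnull : π (measureSupport π)ᶜ = 0 := compl_measureSupport_null π
    have haeS : ∀ᵐ z ∂π, z ∈ S := by
      rw [ae_iff]
      exact measure_mono_null (fun z hz => fun hzs => hz (hsub hzs)) hnull
    have key : ∫ z, Φ z ∂π = ∫ x, φ x ∂P + ∫ y, ψ y ∂Q := by
      rw [← hiφ, ← hiψ, ← integral_add hφfst hψsnd]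
      refine integral_congr_ae ?_
      filter_upwards [haeS] with z hz
      exact hz.2.2.symm
    have hwle : ∫ z, Φ z ∂π ≤ v :=
      hprimal.1 ⟨π, inferInstance, hπ₁, hπ₂, hΦint, rfl⟩
    have hvle : v ≤ ∫ x, φ x ∂P + ∫ y, ψ y ∂Q :=
      hdual.1 ⟨φ, ψ, hφcont.measurable, hψcont.measurable, hφint, hψint, hfeas, rfl⟩
    have : ∫ z, Φ z ∂π = v := le_antisymm hwle (by rw [key]; exact hvle)
    exact ⟨this, by rw [← key]; exact this⟩
end

section
/- Dual minimizers satisfy the conjugacy relations: let Φ : 𝒳 × 𝒴 → ℝ be continuous and bounded, and suppose (φ, ψ) is a minimizer of the dual Monge–Kantorovich problem. Then φ(x) = sup_{y ∈ 𝒴} {Φ(x,y) − ψ(y)} for P-almost every x ∈ 𝒳, and ψ(y) = sup_{x ∈ 𝒳} {Φ(x,y) − φ(x)} for Q-almost every y ∈ 𝒴. -/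
open MeasureTheory


open MeasureTheory Filter Set

theorem mk_aux {d d' : ℕ} (𝒳 : Set (Fin d → ℝ)) (𝒴 : Set (Fin d' → ℝ))
    (h𝒴ne : 𝒴.Nonempty)
    (P : Measure (Fin d → ℝ)) [IsProbabilityMeasure P]
    (hP : P 𝒳ᶜ = 0)
    (Φ : (Fin d → ℝ) → (Fin d' → ℝ) → ℝ)
    (hΦcont : ∀ y, Continuous fun x => Φ x y)
    (C : ℝ) (hC : ∀ x y, |Φ x y| ≤ C)
    (φ : (Fin d → ℝ) → ℝ) (ψ : (Fin d' → ℝ) → ℝ)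
    (hφmeas : Measurable φ) (hφint : Integrable φ P)
    (hfeas : ∀ x ∈ 𝒳, ∀ y ∈ 𝒴, Φ x y ≤ φ x + ψ y)
    (hopt : ∀ φ', Measurable φ' → Integrable φ' P →
      (∀ x ∈ 𝒳, ∀ y ∈ 𝒴, Φ x y ≤ φ' x + ψ y) → ∫ x, φ x ∂P ≤ ∫ x, φ' x ∂P) :
    ∀ᵐ x ∂P, φ x = sSup ((fun y => Φ x y - ψ y) '' 𝒴) := by
  obtain ⟨y₀, hy₀⟩ := h𝒴ne
  haveI : Nonempty 𝒴 := ⟨⟨y₀, hy₀⟩⟩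
  have hC0 : 0 ≤ C := (abs_nonneg _).trans (hC (fun _ => 0) y₀)
  set h : ℕ → (Fin d → ℝ) → ℝ :=
    fun n x => ⨆ y : 𝒴, min (Φ x ↑y - ψ ↑y) (n : ℝ) with hh
  have hbdd : ∀ (n : ℕ) x, BddAbove (range fun y : 𝒴 => min (Φ x ↑y - ψ ↑y) (n : ℝ)) :=
    fun n x => ⟨n, by rintro _ ⟨y, rfl⟩; exact min_le_right _ _⟩
  have hhmeas : ∀ n, Measurable (h n) := by
    intro n
    apply LowerSemicontinuous.measurable
    apply lowerSemicontinuous_ciSup (fun x => hbdd n x)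
    intro y
    exact (((hΦcont y).sub continuous_const).min continuous_const).lowerSemicontinuous
  set G : (Fin d → ℝ) → ℝ := fun x => ⨆ n : ℕ, min (h n x) (φ x) with hG
  have hGbdd : ∀ x, BddAbove (range fun n : ℕ => min (h n x) (φ x)) := fun x =>
    ⟨φ x, by rintro _ ⟨n, rfl⟩; exact min_le_right _ _⟩
  have hGle : ∀ x, G x ≤ φ x := fun x => ciSup_le fun n => min_le_right _ _
  have hmono : ∀ x, Monotone fun n : ℕ => min (h n x) (φ x) := by
    intro x n m hnm
    refine min_le_min ?_ le_rfl
    refine ciSup_mono (hbdd m x) fun y => min_le_min le_rfl ?_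
    exact_mod_cast hnm
  have hGmeas : Measurable G := by
    apply measurable_of_tendsto_metrizable (fun n => (hhmeas n).min hφmeas)
    exact tendsto_pi_nhds.2 fun x => tendsto_atTop_ciSup (hmono x) (hGbdd x)
  have hGlb : ∀ x, min (min (-C - ψ y₀) 0) (φ x) ≤ G x := by
    intro x
    refine le_trans (min_le_min ?_ le_rfl) (le_ciSup (hGbdd x) 0)
    have h0 : min (Φ x y₀ - ψ y₀) ((0:ℕ):ℝ) ≤ h 0 x := le_ciSup (hbdd 0 x) ⟨y₀, hy₀⟩
    rw [Nat.cast_zero] at h0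
    refine le_trans (min_le_min ?_ le_rfl) h0
    linarith [(abs_le.1 (hC x y₀)).1]
  have hGint : Integrable G P := by
    have hint : Integrable (fun x => |φ x| + (C + |ψ y₀|)) P :=
      hφint.abs.add (integrable_const _)
    refine hint.mono' hGmeas.aestronglyMeasurable ?_
    filter_upwards with x
    rw [Real.norm_eq_abs, abs_le]
    constructor
    · refine le_trans ?_ (hGlb x)
      refine le_min (le_min ?_ ?_) ?_
      · linarith [abs_nonneg (φ x), le_abs_self (ψ y₀)]
      · linarith [abs_nonneg (φ x), abs_nonneg (ψ y₀)]
      · linarith [neg_abs_le (φ x), abs_nonneg (ψ y₀)]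
    · exact (hGle x).trans (by linarith [le_abs_self (φ x), abs_nonneg (ψ y₀)])
  have key : ∀ x ∈ 𝒳, ∀ y ∈ 𝒴, Φ x y - ψ y ≤ G x := by
    intro x hx y hy
    have h1 : Φ x y - ψ y ≤ φ x := by linarith [hfeas x hx y hy]
    obtain ⟨n, hn⟩ := exists_nat_ge (Φ x y - ψ y)
    have h2 : Φ x y - ψ y ≤ h n x :=
      le_trans (le_min le_rfl hn) (le_ciSup (hbdd n x) ⟨y, hy⟩)
    exact le_trans (le_min h2 h1) (le_ciSup (hGbdd x) n)
  have hfeas' : ∀ x ∈ 𝒳, ∀ y ∈ 𝒴, Φ x y ≤ G x + ψ y := by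
    intro x hx y hy
    linarith [key x hx y hy]
  have hint1 : ∫ x, φ x ∂P ≤ ∫ x, G x ∂P := hopt G hGmeas hGint hfeas'
  have hint2 : ∫ x, G x ∂P ≤ ∫ x, φ x ∂P := integral_mono hGint hφint hGle
  have hzero : ∫ x, (φ x - G x) ∂P = 0 := by
    rw [integral_sub hφint hGint]; linarith
  have hae : ∀ᵐ x ∂P, φ x - G x = 0 := by
    have := (integral_eq_zero_iff_of_nonneg
      (fun x => sub_nonneg.2 (hGle x)) (hφint.sub hGint)).1 hzero
    filter_upwards [this] with x hx using hx
  have hX : ∀ᵐ x ∂P, x ∈ 𝒳 := by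
    rw [ae_iff]
    exact hP
  filter_upwards [hae, hX] with x hx1 hx2
  have hSne : ((fun y => Φ x y - ψ y) '' 𝒴).Nonempty := ⟨_, ⟨y₀, hy₀, rfl⟩⟩
  have hSbdd : BddAbove ((fun y => Φ x y - ψ y) '' 𝒴) :=
    ⟨φ x, by
      rintro _ ⟨y, hy, rfl⟩
      show Φ x y - ψ y ≤ φ x
      linarith [hfeas x hx2 y hy]⟩
  have hxG : φ x = G x := by linarith
  rw [hxG]
  apply le_antisymm
  · refine ciSup_le fun n => le_trans (min_le_left _ _) ?_
    refine ciSup_le fun y => le_trans (min_le_left _ _) ?_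
    exact le_csSup hSbdd ⟨y, y.2, rfl⟩
  · refine csSup_le hSne ?_
    rintro a ⟨y, hy, rfl⟩
    exact key x hx2 y hy

/-- Dual minimizers satisfy the conjugacy relations: if `Φ` is continuous and bounded and
`(φ, ψ)` minimizes the dual Monge–Kantorovich problem, then
`φ(x) = sup_{y ∈ 𝒴} {Φ(x,y) − ψ(y)}` for `P`-a.e. `x`, and
`ψ(y) = sup_{x ∈ 𝒳} {Φ(x,y) − φ(x)}` for `Q`-a.e. `y`. -/
theorem mk_dual_conjugacy
    {d d' : ℕ} (𝒳 : Set (Fin d → ℝ)) (𝒴 : Set (Fin d' → ℝ))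
    (h𝒳 : IsClosed 𝒳) (h𝒴 : IsClosed 𝒴)
    (P : Measure (Fin d → ℝ)) (Q : Measure (Fin d' → ℝ))
    [IsProbabilityMeasure P] [IsProbabilityMeasure Q]
    (hP : P 𝒳ᶜ = 0) (hQ : Q 𝒴ᶜ = 0)
    (Φ : (Fin d → ℝ) × (Fin d' → ℝ) → ℝ)
    (hΦcont : Continuous Φ) (hΦbdd : ∃ C : ℝ, ∀ z, |Φ z| ≤ C)
    (φ : (Fin d → ℝ) → ℝ) (ψ : (Fin d' → ℝ) → ℝ)
    (hφmeas : Measurable φ) (hψmeas : Measurable ψ)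
    (hφint : Integrable φ P) (hψint : Integrable ψ Q)
    (hfeas : ∀ x ∈ 𝒳, ∀ y ∈ 𝒴, Φ (x, y) ≤ φ x + ψ y)
    (hmin : ∀ (φ' : (Fin d → ℝ) → ℝ) (ψ' : (Fin d' → ℝ) → ℝ),
      Measurable φ' → Measurable ψ' → Integrable φ' P → Integrable ψ' Q →
      (∀ x ∈ 𝒳, ∀ y ∈ 𝒴, Φ (x, y) ≤ φ' x + ψ' y) →
      ∫ x, φ x ∂P + ∫ y, ψ y ∂Q ≤ ∫ x, φ' x ∂P + ∫ y, ψ' y ∂Q) :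
    (∀ᵐ x ∂P, φ x = sSup ((fun y => Φ (x, y) - ψ y) '' 𝒴)) ∧
    (∀ᵐ y ∂Q, ψ y = sSup ((fun x => Φ (x, y) - φ x) '' 𝒳)) := by
  obtain ⟨C, hC⟩ := hΦbdd
  have h𝒳ne : 𝒳.Nonempty := by
    rcases Set.eq_empty_or_nonempty 𝒳 with h | h
    · exfalso
      rw [h, Set.compl_empty] at hP
      simp [measure_univ] at hP
    · exact h
  have h𝒴ne : 𝒴.Nonempty := by
    rcases Set.eq_empty_or_nonempty 𝒴 with h | h
    · exfalso
      rw [h, Set.compl_empty] at hQ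
      simp [measure_univ] at hQ
    · exact h
  constructor
  · exact mk_aux 𝒳 𝒴 h𝒴ne P hP (fun x y => Φ (x, y))
      (fun y => hΦcont.comp (Continuous.prodMk_left y))
      C (fun x y => hC (x, y)) φ ψ hφmeas hφint hfeas
      (fun φ' hm hi hf => by
        have := hmin φ' ψ hm hψmeas hi hψint hf
        linarith)
  · exact mk_aux 𝒴 𝒳 h𝒳ne Q hQ (fun y x => Φ (x, y))
      (fun x => hΦcont.comp (Continuous.prodMk_right x))
      C (fun y x => hC (x, y)) ψ φ hψmeas hψint
      (fun y hy x hx => by linarith [hfeas x hx y hy])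
      (fun ψ' hm hi hf => by
        have := hmin φ ψ' hφmeas hm hφint hi
          (fun x hx y hy => by linarith [hf y hy x hx])
        linarith)
end

section
/- Conjugate structure of dual solutions for the scalar product surplus: let P and Q be Borel probability measures on ℝ^d with finite second moments and let Φ(x,y) = x⊤y. Then there exists a minimizer (φ, ψ) of the dual Monge–Kantorovich problem in which φ : ℝ^d → ℝ ∪ {+∞} is a proper lower semicontinuous convex function and ψ = φ* is its Legendre–Fenchel conjugate, i.e. ψ(y) = sup_{x ∈ ℝ^d} {x⊤y − φ(x)}, and moreover φ = ψ*, i.e. φ(x) = sup_{y ∈ ℝ^d} {x⊤y − ψ(y)}. -/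
set_option linter.unusedSectionVars false
set_option linter.unusedVariables false
set_option linter.unnecessarySimpa false
set_option linter.unnecessarySeqFocus false
set_option linter.unreachableTactic false
set_option linter.unusedTactic false
set_option maxHeartbeats 1000000

open MeasureTheory Filter
open scoped RealInnerProductSpace ENNReal

abbrev Eud (d : ℕ) := EuclideanSpace ℝ (Fin d)

/-- Convexity for an `ℝ ∪ {+∞}`-valued (i.e. `EReal`-valued, never `⊥`) function:
whenever the values at two points are bounded by reals `a` and `b`, the value at a convex
combination is bounded by the corresponding convex combination of `a` and `b`. -/
def IsConvexEReal {E : Type*} [AddCommMonoid E] [Module ℝ E] (φ : E → EReal) : Prop :=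
  ∀ (x y : E) (t a b : ℝ), 0 ≤ t → t ≤ 1 → φ x ≤ (a : EReal) → φ y ≤ (b : EReal) →
    φ (t • x + (1 - t) • y) ≤ ((t * a + (1 - t) * b : ℝ) : EReal)

section EConj

variable {E : Type*} [NormedAddCommGroup E] [InnerProductSpace ℝ E]

noncomputable def econj (f : E → EReal) (y : E) : EReal :=
  ⨆ x, ((⟪x, y⟫ : ℝ) : EReal) - f x

lemma er_sub_top (x : EReal) : x - ⊤ = ⊥ := by
  show x + _ = ⊥
  simp

lemma er_sub_le_of_le {a : ℝ} {b c : EReal} (h : (a : EReal) - c ≤ b) :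
    (a : EReal) - b ≤ c := by
  induction c with
  | bot =>
      rw [EReal.coe_sub_bot] at h
      rw [top_le_iff.1 h, er_sub_top]
  | coe c =>
      calc (a : EReal) - b ≤ (a : EReal) - ((a : EReal) - (c : EReal)) := by
            refine EReal.sub_le_sub le_rfl ?_
            rw [← EReal.coe_sub]; exact_mod_cast h
        _ = c := by rw [← EReal.coe_sub, ← EReal.coe_sub]; norm_num
  | top => exact le_top

lemma le_econj (f : E → EReal) (x y : E) : ((⟪x, y⟫ : ℝ) : EReal) - f x ≤ econj f y :=
  le_iSup (fun x => ((⟪x, y⟫ : ℝ) : EReal) - f x) x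

lemma econj_le {f : E → EReal} {y : E} {c : EReal}
    (h : ∀ x, ((⟪x, y⟫ : ℝ) : EReal) - f x ≤ c) : econj f y ≤ c :=
  iSup_le h

lemma econj_antitone {f g : E → EReal} (h : ∀ x, f x ≤ g x) (y : E) :
    econj g y ≤ econj f y :=
  iSup_le fun x => le_trans (EReal.sub_le_sub le_rfl (h x)) (le_econj f x y)

lemma econj_biconj_le (f : E → EReal) (x : E) : econj (econj f) x ≤ f x := by
  refine econj_le fun z => ?_
  have h1 : ((⟪x, z⟫ : ℝ) : EReal) - f x ≤ econj f z := le_econj f x z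
  rw [← real_inner_comm x z] at h1
  exact er_sub_le_of_le h1

lemma econj_triple (f : E → EReal) : econj (econj (econj f)) = econj f := by
  ext y
  exact le_antisymm (econj_biconj_le (econj f) y)
    (econj_antitone (econj_biconj_le f) y)

lemma er_cases (x : EReal) : x = ⊥ ∨ (∃ r : ℝ, x = (r : EReal)) ∨ x = ⊤ := by
  induction x with
  | bot => exact Or.inl rfl
  | coe r => exact Or.inr (Or.inl ⟨r, rfl⟩)
  | top => exact Or.inr (Or.inr rfl)

lemma econj_lsc (f : E → EReal) : LowerSemicontinuous (econj f) := by
  intro y c hc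
  obtain ⟨x₀, hx₀⟩ := lt_iSup_iff.1 hc
  have key : ∀ᶠ y' in nhds y, c < ((⟪x₀, y'⟫ : ℝ) : EReal) - f x₀ := by
    rcases er_cases (f x₀) with hfx | ⟨s, hfx⟩ | hfx
    · refine Filter.Eventually.of_forall fun y' => ?_
      rw [hfx] at hx₀ ⊢
      rw [EReal.coe_sub_bot] at hx₀ ⊢
      exact hx₀
    · rw [hfx] at hx₀ ⊢
      have hcont : Continuous fun y' : E => (((⟪x₀, y'⟫ - s : ℝ)) : EReal) :=
        continuous_coe_real_ereal.comp ((continuous_const.inner continuous_id).sub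
          continuous_const)
      have hmem : y ∈ (fun y' : E => (((⟪x₀, y'⟫ - s : ℝ)) : EReal)) ⁻¹' (Set.Ioi c) := by
        simp only [Set.mem_preimage, Set.mem_Ioi]
        rw [EReal.coe_sub]
        exact hx₀
      filter_upwards [(isOpen_Ioi.preimage hcont).mem_nhds hmem] with y' hy'
      rw [← EReal.coe_sub]
      exact hy'
    · rw [hfx, er_sub_top] at hx₀
      exact absurd hx₀ (not_lt_bot)
  filter_upwards [key] with y' hy' using lt_of_lt_of_le hy' (le_econj f x₀ y')

lemma econj_convex (f : E → EReal) : IsConvexEReal (econj f) := by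
  intro y₁ y₂ t a b ht ht1 ha hb
  refine econj_le fun x => ?_
  rcases er_cases (f x) with hfx | ⟨s, hfx⟩ | hfx
  · exfalso
    have := le_econj f x y₁
    rw [hfx, EReal.coe_sub_bot] at this
    exact absurd (le_trans this ha) (by simp)
  · have h1 : ((⟪x, y₁⟫ - s : ℝ) : EReal) ≤ (a : EReal) := by
      have := le_econj f x y₁; rw [hfx, ← EReal.coe_sub] at this; exact le_trans this ha
    have h2 : ((⟪x, y₂⟫ - s : ℝ) : EReal) ≤ (b : EReal) := by
      have := le_econj f x y₂; rw [hfx, ← EReal.coe_sub] at this; exact le_trans this hb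
    rw [EReal.coe_le_coe_iff] at h1 h2
    have hinner : ⟪x, t • y₁ + (1 - t) • y₂⟫ = t * ⟪x, y₁⟫ + (1 - t) * ⟪x, y₂⟫ := by
      rw [inner_add_right, real_inner_smul_right, real_inner_smul_right]
    rw [hfx, ← EReal.coe_sub, EReal.coe_le_coe_iff, hinner]
    nlinarith
  · rw [hfx, er_sub_top]
    exact bot_le

lemma le_econj_biconj {f : E → EReal} {z : E} {M : ℝ}
    (h : ∀ x, ((⟪x, z⟫ - M : ℝ) : EReal) ≤ f x) (x : E) :
    ((⟪x, z⟫ - M : ℝ) : EReal) ≤ econj (econj f) x := by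
  have h1 : econj f z ≤ (M : EReal) := by
    refine le_trans (econj_antitone (g := f) h z) (econj_le fun x' => ?_)
    rw [← EReal.coe_sub]
    norm_num
  refine le_trans ?_ (le_econj (econj f) z x)
  calc ((⟪x, z⟫ - M : ℝ) : EReal) = ((⟪z, x⟫ : ℝ) : EReal) - (M : EReal) := by
        rw [← EReal.coe_sub, real_inner_comm]
    _ ≤ ((⟪z, x⟫ : ℝ) : EReal) - econj f z := EReal.sub_le_sub le_rfl h1

lemma econj_coe_dense_sup {w : E → ℝ} (hw : Continuous w) {u : ℕ → E}
    (hu : DenseRange u) (y : E) :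
    econj (fun x => ((w x : ℝ) : EReal)) y = ⨆ n, ((⟪u n, y⟫ - w (u n) : ℝ) : EReal) := by
  have hterm : ∀ x : E, ((⟪x, y⟫ : ℝ) : EReal) - ((w x : ℝ) : EReal)
      = ((⟪x, y⟫ - w x : ℝ) : EReal) := fun x => by rw [← EReal.coe_sub]
  refine le_antisymm (econj_le fun x => ?_) (iSup_le fun n => ?_)
  · have hx : x ∈ closure (Set.range u) := by rw [hu.closure_range]; trivial
    obtain ⟨v, hv_mem, hv_tend⟩ := mem_closure_iff_seq_limit.1 hx
    have hF : Continuous fun p : E => ⟪p, y⟫ - w p :=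
      ((continuous_id.inner continuous_const)).sub hw
    have htend : Filter.Tendsto (fun k => ((⟪v k, y⟫ - w (v k) : ℝ) : EReal))
        Filter.atTop (nhds ((⟪x, y⟫ - w x : ℝ) : EReal)) :=
      EReal.tendsto_coe.2 ((hF.continuousAt.tendsto).comp hv_tend)
    rw [hterm]
    refine le_of_tendsto htend (Filter.Eventually.of_forall fun k => ?_)
    obtain ⟨n, hn⟩ := hv_mem k
    rw [← hn]
    exact le_iSup (fun n => ((⟪u n, y⟫ - w (u n) : ℝ) : EReal)) n
  · rw [← hterm]
    exact le_econj (fun x => ((w x : ℝ) : EReal)) (u n) y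

end EConj



section MT
variable {d : ℕ}
variable (P Q : Measure (Eud d)) [IsProbabilityMeasure P] [IsProbabilityMeasure Q]

lemma integrable_id' (hP2 : Integrable (fun x : Eud d => ‖x‖ ^ 2) P) :
    Integrable (fun x : Eud d => x) P := by
  refine Integrable.mono' ((integrable_const 1).add hP2) aestronglyMeasurable_id ?_
  refine Filter.Eventually.of_forall fun x => ?_
  simp only [Pi.add_apply]
  nlinarith [norm_nonneg x]

lemma integrable_inner_left (hP2 : Integrable (fun x : Eud d => ‖x‖ ^ 2) P) (z : Eud d) :
    Integrable (fun x : Eud d => ⟪x, z⟫) P :=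
  (integrable_id' P hP2).inner_const z

lemma integral_inner_right (hP2 : Integrable (fun x : Eud d => ‖x‖ ^ 2) P) (z : Eud d) :
    ∫ x, ⟪z, x⟫ ∂P = ⟪z, ∫ x, x ∂P⟫ :=
  integral_inner (integrable_id' P hP2) z

lemma integral_inner_left (hP2 : Integrable (fun x : Eud d => ‖x‖ ^ 2) P) (z : Eud d) :
    ∫ x, ⟪x, z⟫ ∂P = ⟪∫ x, x ∂P, z⟫ := by
  rw [real_inner_comm, ← integral_inner_right P hP2 z]
  exact integral_congr_ae (Filter.Eventually.of_forall fun x => (real_inner_comm x z).symm)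

/-- Swap the order of a.e. quantifiers for a measurable feasibility predicate. -/
lemma feas_swap {f g : Eud d → ℝ} (hf : Measurable f) (hg : Measurable g)
    (h : ∀ᵐ x ∂P, ∀ᵐ y ∂Q, ⟪x, y⟫ ≤ f x + g y) :
    ∀ᵐ y ∂Q, ∀ᵐ x ∂P, ⟪x, y⟫ ≤ f x + g y := by
  have hcont : Continuous fun p : Eud d × Eud d => (⟪p.1, p.2⟫ : ℝ) := continuous_inner
  set s : Set (Eud d × Eud d) := {p : Eud d × Eud d | f p.1 + g p.2 < ⟪p.1, p.2⟫} with hs_def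
  have hs : MeasurableSet s :=
    measurableSet_lt ((hf.comp measurable_fst).add (hg.comp measurable_snd)) hcont.measurable
  have h0 : (P.prod Q) s = 0 := by
    rw [MeasureTheory.Measure.measure_prod_null hs]
    filter_upwards [h] with x hx
    have hset : Prod.mk x ⁻¹' s = {y | ¬ ⟪x, y⟫ ≤ f x + g y} := by
      ext y; simp [hs_def, not_le]
    show Q (Prod.mk x ⁻¹' s) = (0 : Eud d → ℝ≥0∞) x
    rw [hset, Pi.zero_apply]
    exact MeasureTheory.ae_iff.mp hx
  have h1 : (Q.prod P) (Prod.swap ⁻¹' s) = 0 := by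
    have := MeasureTheory.Measure.prod_swap (μ := Q) (ν := P)
    rw [← this, MeasureTheory.Measure.map_apply measurable_swap hs] at h0
    exact h0
  have h2 : ∀ᵐ y ∂Q, P (Prod.mk y ⁻¹' (Prod.swap ⁻¹' s)) = 0 :=
    (MeasureTheory.Measure.measure_prod_null (measurable_swap hs)).1 h1
  filter_upwards [h2] with y hy
  have hset : Prod.mk y ⁻¹' (Prod.swap ⁻¹' s) = {x | ¬ ⟪x, y⟫ ≤ f x + g y} := by
    ext x; simp [hs_def, not_le]
  rw [hset] at hy
  exact MeasureTheory.ae_iff.mpr hy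

lemma feas_avg_right {f g : Eud d → ℝ} (hQ2 : Integrable (fun y : Eud d => ‖y‖ ^ 2) Q)
    (hg : Integrable g Q)
    (h : ∀ᵐ x ∂P, ∀ᵐ y ∂Q, ⟪x, y⟫ ≤ f x + g y) :
    ∀ᵐ x ∂P, ⟪x, ∫ y, y ∂Q⟫ ≤ f x + ∫ y, g y ∂Q := by
  filter_upwards [h] with x hx
  have h1 : ∫ y, ⟪x, y⟫ ∂Q ≤ ∫ y, (f x + g y) ∂Q := by
    refine integral_mono_ae ((integrable_id' Q hQ2).const_inner x)
      ((integrable_const (f x)).add hg) hx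
  rw [integral_add (integrable_const (f x)) hg, integral_const] at h1
  rw [← integral_inner_right Q hQ2 x]
  simpa using h1

lemma comp_lower_bound {f g : Eud d → ℝ}
    (hP2 : Integrable (fun x : Eud d => ‖x‖ ^ 2) P)
    (hQ2 : Integrable (fun y : Eud d => ‖y‖ ^ 2) Q)
    (hf : Integrable f P) (hg : Integrable g Q)
    (h : ∀ᵐ x ∂P, ∀ᵐ y ∂Q, ⟪x, y⟫ ≤ f x + g y) :
    ⟪∫ x, x ∂P, ∫ y, y ∂Q⟫ ≤ ∫ x, f x ∂P + ∫ y, g y ∂Q := by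
  have h1 := feas_avg_right P Q hQ2 hg h
  have h2 : ∫ x, ⟪x, ∫ y, y ∂Q⟫ ∂P ≤ ∫ x, (f x + ∫ y, g y ∂Q) ∂P :=
    integral_mono_ae (integrable_inner_left P hP2 _)
      (hf.add (integrable_const _)) h1
  rw [integral_add hf (integrable_const _), integral_const] at h2
  rw [← integral_inner_left P hP2]
  simpa using h2

end MT


section MonoLimit
variable {α : Type*} [MeasurableSpace α] (μ : Measure α) [IsProbabilityMeasure μ]

/-- Monotone convergence package for a pointwise a.e. nondecreasing sequence of integrable
functions with uniformly bounded integrals. -/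
lemma mono_limit (h : ℕ → α → ℝ) (hm : ∀ n, Measurable (h n))
    (hint : ∀ n, Integrable (h n) μ)
    (hmono : ∀ᵐ x ∂μ, Monotone fun n => h n x) (C : ℝ)
    (hC : ∀ n, ∫ x, h n x ∂μ ≤ C) :
    ∃ hstar : α → ℝ, Measurable hstar ∧ Integrable hstar μ ∧
      (∀ᵐ x ∂μ, Tendsto (fun n => h n x) atTop (nhds (hstar x))) ∧
      Tendsto (fun n => ∫ x, h n x ∂μ) atTop (nhds (∫ x, hstar x ∂μ)) ∧
      (∀ᵐ x ∂μ, ∀ n, h n x ≤ hstar x) := by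
  classical
  set δ : ℕ → α → ℝ≥0∞ := fun n x => ENNReal.ofReal (h n x - h 0 x) with hδ
  have hδm : ∀ n, Measurable (δ n) := fun n =>
    ENNReal.measurable_ofReal.comp ((hm n).sub (hm 0))
  have hδmono : ∀ᵐ x ∂μ, Monotone fun n => δ n x := by
    filter_upwards [hmono] with x hx
    exact fun i j hij => ENNReal.ofReal_le_ofReal (by simp [hδ]; linarith [hx hij])
  have hδint : ∀ n, ∫⁻ x, δ n x ∂μ = ENNReal.ofReal (∫ x, (h n x - h 0 x) ∂μ) := by
    intro n
    have hnn : 0 ≤ᵐ[μ] fun x => (h n - h 0) x := by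
      filter_upwards [hmono] with x hx
      simp only [Pi.sub_apply, Pi.zero_apply, sub_nonneg]
      exact hx (Nat.zero_le n)
    have := MeasureTheory.ofReal_integral_eq_lintegral_ofReal ((hint n).sub (hint 0)) hnn
    simp only [Pi.sub_apply] at this
    exact this.symm
  have hδbound : ∀ n, ∫⁻ x, δ n x ∂μ ≤ ENNReal.ofReal (C - ∫ x, h 0 x ∂μ) := by
    intro n
    rw [hδint n, integral_sub (hint n) (hint 0)]
    exact ENNReal.ofReal_le_ofReal (by linarith [hC n])
  have hsupδ : ∫⁻ x, ⨆ n, δ n x ∂μ ≤ ENNReal.ofReal (C - ∫ x, h 0 x ∂μ) := by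
    rw [lintegral_iSup' (fun n => (hδm n).aemeasurable) hδmono]
    exact iSup_le hδbound
  have hfin : ∀ᵐ x ∂μ, (⨆ n, δ n x) < ∞ := by
    refine ae_lt_top (Measurable.iSup hδm) (lt_of_le_of_lt hsupδ ENNReal.ofReal_lt_top).ne
  -- the limit function
  set S : α → EReal := fun x => ⨆ n, ((h n x : ℝ) : EReal) with hS
  have hSm : Measurable S := Measurable.iSup fun n => (hm n).coe_real_ereal
  set hstar : α → ℝ := fun x => (S x).toReal with hstar_def
  have hstarm : Measurable hstar := hSm.ereal_toReal
  have hgood : ∀ᵐ x ∂μ, (Monotone fun n => h n x) ∧ (⨆ n, δ n x) < ∞ :=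
    hmono.and hfin
  -- pointwise facts on the good set
  have key : ∀ x, (Monotone fun n => h n x) → (⨆ n, δ n x) < ∞ →
      BddAbove (Set.range fun n => h n x) ∧ hstar x = ⨆ n, h n x ∧
      Tendsto (fun n => h n x) atTop (nhds (hstar x)) := by
    intro x hx hfx
    have hub : ∀ n, h n x ≤ h 0 x + (⨆ n, δ n x).toReal := by
      intro n
      have h1 : δ n x ≤ ⨆ n, δ n x := le_iSup (fun n => δ n x) n
      have h2 : (δ n x).toReal ≤ (⨆ n, δ n x).toReal :=
        ENNReal.toReal_mono hfx.ne h1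
      have h3 : (δ n x).toReal = h n x - h 0 x := by
        simp only [hδ]
        exact ENNReal.toReal_ofReal (by linarith [hx (Nat.zero_le n)])
      linarith
    have bdd : BddAbove (Set.range fun n => h n x) := by
      refine ⟨h 0 x + (⨆ n, δ n x).toReal, ?_⟩
      rintro r ⟨n, rfl⟩
      exact hub n
    have hrt : Tendsto (fun n => h n x) atTop (nhds (⨆ n, h n x)) :=
      tendsto_atTop_ciSup hx bdd
    have hcoe : Tendsto (fun n => ((h n x : ℝ) : EReal)) atTop
        (nhds (((⨆ n, h n x : ℝ) : EReal))) := EReal.tendsto_coe.2 hrt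
    have hmonoE : Monotone fun n => ((h n x : ℝ) : EReal) := fun i j hij =>
      EReal.coe_le_coe_iff.2 (hx hij)
    have hSx : S x = ((⨆ n, h n x : ℝ) : EReal) :=
      tendsto_nhds_unique (tendsto_atTop_iSup hmonoE) hcoe
    have hsr : hstar x = ⨆ n, h n x := by show (S x).toReal = _; rw [hSx]; simp
    exact ⟨bdd, hsr, by rw [hsr]; exact hrt⟩
  have hintT : Integrable (fun x => (⨆ n, δ n x).toReal) μ := by
    refine integrable_toReal_of_lintegral_ne_top (Measurable.iSup hδm).aemeasurable ?_
    exact (lt_of_le_of_lt hsupδ ENNReal.ofReal_lt_top).ne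
  have hbound : Integrable (fun x => |h 0 x| + (⨆ n, δ n x).toReal) μ :=
    (hint 0).abs.add hintT
  have hstar_int : Integrable hstar μ := by
    refine Integrable.mono' hbound hstarm.aestronglyMeasurable ?_
    filter_upwards [hgood] with x hx
    obtain ⟨bdd, hsr, _⟩ := key x hx.1 hx.2
    have h1 : h 0 x ≤ hstar x := by
      rw [hsr]; exact le_ciSup bdd 0
    have h2 : hstar x ≤ h 0 x + (⨆ n, δ n x).toReal := by
      rw [hsr]
      refine ciSup_le fun n => ?_
      have h3 : (δ n x).toReal ≤ (⨆ n, δ n x).toReal :=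
        ENNReal.toReal_mono hx.2.ne (le_iSup (fun n => δ n x) n)
      have h4 : (δ n x).toReal = h n x - h 0 x := by
        simp only [hδ]
        exact ENNReal.toReal_ofReal (by linarith [hx.1 (Nat.zero_le n)])
      linarith
    have h0nn : (0:ℝ) ≤ (⨆ n, δ n x).toReal := ENNReal.toReal_nonneg
    rw [Real.norm_eq_abs, abs_le]
    constructor
    · have := neg_abs_le (h 0 x); linarith
    · have := le_abs_self (h 0 x); linarith
  have htendae : ∀ᵐ x ∂μ, Tendsto (fun n => h n x) atTop (nhds (hstar x)) := by
    filter_upwards [hgood] with x hx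
    exact (key x hx.1 hx.2).2.2
  have hle : ∀ᵐ x ∂μ, ∀ n, h n x ≤ hstar x := by
    filter_upwards [hgood] with x hx n
    obtain ⟨bdd, hsr, _⟩ := key x hx.1 hx.2
    rw [hsr]; exact le_ciSup bdd n
  refine ⟨hstar, hstarm, hstar_int, htendae, ?_, hle⟩
  refine tendsto_integral_of_dominated_convergence (fun x => |h 0 x| + |hstar x|)
    (fun n => (hm n).aestronglyMeasurable) ((hint 0).abs.add hstar_int.abs) ?_ htendae
  intro n
  filter_upwards [hgood, hle] with x hx hlex
  rw [Real.norm_eq_abs, abs_le]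
  have h1 : h 0 x ≤ h n x := hx.1 (Nat.zero_le n)
  have h2 := hlex n
  have := neg_abs_le (h 0 x)
  have := le_abs_self (hstar x)
  have := abs_nonneg (hstar x)
  have := abs_nonneg (h 0 x)
  constructor <;> linarith

end MonoLimit


section AntiLimit
variable {α : Type*} [MeasurableSpace α] (μ : Measure α) [IsProbabilityMeasure μ]


lemma anti_limit (h : ℕ → α → ℝ) (hm : ∀ n, Measurable (h n))
    (hint : ∀ n, Integrable (h n) μ)
    (hanti : ∀ᵐ x ∂μ, Antitone fun n => h n x) (C : ℝ)
    (hC : ∀ n, C ≤ ∫ x, h n x ∂μ) :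
    ∃ hstar : α → ℝ, Measurable hstar ∧ Integrable hstar μ ∧
      (∀ᵐ x ∂μ, Tendsto (fun n => h n x) atTop (nhds (hstar x))) ∧
      Tendsto (fun n => ∫ x, h n x ∂μ) atTop (nhds (∫ x, hstar x ∂μ)) ∧
      (∀ᵐ x ∂μ, ∀ n, hstar x ≤ h n x) := by
  obtain ⟨G, hGm, hGi, hGt, hGit, hGle⟩ := mono_limit μ (fun n x => - h n x)
    (fun n => (hm n).neg) (fun n => (hint n).neg)
    (by filter_upwards [hanti] with x hx; exact fun i j hij => neg_le_neg (hx hij)) (-C)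
    (fun n => by rw [integral_neg]; linarith [hC n])
  refine ⟨fun x => - G x, hGm.neg, hGi.neg, ?_, ?_, ?_⟩
  · filter_upwards [hGt] with x hx
    simpa using hx.neg
  · have := hGit.neg
    simp only [← integral_neg] at this ⊢
    convert this using 2 <;> simp
  · filter_upwards [hGle] with x hx n
    linarith [hx n]

end AntiLimit

section Windows
variable {α : Type*}

def winF (f : ℕ → α → ℝ) (m : ℕ) : ℕ → α → ℝ
  | 0 => f m
  | n+1 => fun x => max (winF f m n x) (f (m + n + 1) x)

def winG (g : ℕ → α → ℝ) (m : ℕ) : ℕ → α → ℝ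
  | 0 => g m
  | n+1 => fun y => min (winG g m n y) (g (m + n + 1) y)

lemma winF_mono (f : ℕ → α → ℝ) (m : ℕ) (x : α) : Monotone fun n => winF f m n x :=
  monotone_nat_of_le_succ fun n => le_max_left _ _

lemma winG_anti (g : ℕ → α → ℝ) (m : ℕ) (y : α) : Antitone fun n => winG g m n y :=
  antitone_nat_of_succ_le fun n => min_le_left _ _

lemma winF_le_ge (f : ℕ → α → ℝ) (m n : ℕ) (x : α) : f m x ≤ winF f m n x :=
  winF_mono f m x (Nat.zero_le n)

lemma winG_le (g : ℕ → α → ℝ) (m n : ℕ) (y : α) : winG g m n y ≤ g m y :=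
  winG_anti g m y (Nat.zero_le n)

lemma winF_cross (f : ℕ → α → ℝ) (m n : ℕ) (x : α) :
    winF f (m+1) n x ≤ winF f m (n+1) x := by
  induction n with
  | zero =>
      show f (m+1) x ≤ max (f m x) (f (m + 0 + 1) x)
      simpa using le_max_right _ _
  | succ n ih =>
      show max (winF f (m+1) n x) (f (m+1+n+1) x) ≤ max (winF f m (n+1) x) (f (m+(n+1)+1) x)
      have : m+1+n+1 = m+(n+1)+1 := by omega
      rw [this]
      exact max_le_max ih le_rfl

lemma winG_cross (g : ℕ → α → ℝ) (m n : ℕ) (y : α) :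
    winG g m (n+1) y ≤ winG g (m+1) n y := by
  induction n with
  | zero =>
      show min (g m y) (g (m + 0 + 1) y) ≤ g (m+1) y
      simpa using min_le_right _ _
  | succ n ih =>
      show min (winG g m (n+1) y) (g (m+(n+1)+1) y) ≤ min (winG g (m+1) n y) (g (m+1+n+1) y)
      have : m+1+n+1 = m+(n+1)+1 := by omega
      rw [this]
      exact min_le_min ih le_rfl

lemma winF_lb (f : ℕ → α → ℝ) (ℓ : α → ℝ) (m n : ℕ) (x : α)
    (h : ∀ k, ℓ x ≤ f k x) : ℓ x ≤ winF f m n x :=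
  le_trans (h m) (winF_le_ge f m n x)

lemma winG_lb (g : ℕ → α → ℝ) (ℓ' : α → ℝ) (m n : ℕ) (y : α)
    (h : ∀ k, ℓ' y ≤ g k y) : ℓ' y ≤ winG g m n y := by
  induction n with
  | zero => exact h m
  | succ n ih => exact le_min ih (h _)

lemma win_feas {β : Type*} (f : ℕ → α → ℝ) (g : ℕ → β → ℝ) (c : ℝ) (x : α) (y : β)
    (h : ∀ k, c ≤ f k x + g k y) (m n : ℕ) : c ≤ winF f m n x + winG g m n y := by
  induction n with
  | zero => exact h m
  | succ n ih =>
      show c ≤ max (winF f m n x) (f (m+n+1) x) + min (winG g m n y) (g (m+n+1) y)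
      rcases le_total (winG g m n y) (g (m+n+1) y) with hc | hc
      · rw [min_eq_left hc]
        exact le_trans ih (add_le_add_left (le_max_left _ _) _)
      · rw [min_eq_right hc]
        exact le_trans (h (m+n+1)) (add_le_add_left (le_max_right _ _) _)

lemma win_feas_cross {β : Type*} (f : ℕ → α → ℝ) (g : ℕ → β → ℝ) (c : ℝ) (x : α) (y : β)
    (h : ∀ k, c ≤ f k x + g k y) (m n : ℕ) :
    c ≤ min (winF f m n x) (f (m+n+1) x) + max (winG g m n y) (g (m+n+1) y) := by
  rcases le_total (winF f m n x) (f (m+n+1) x) with hc | hc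
  · rw [min_eq_left hc]
    exact le_trans (win_feas f g c x y h m n) (add_le_add_right (le_max_left _ _) _)
  · rw [min_eq_right hc]
    exact le_trans (h (m+n+1)) (add_le_add_right (le_max_right _ _) _)

end Windows

lemma integral_max_add_min {α : Type*} [MeasurableSpace α] {μ : Measure α} {u v : α → ℝ}
    (hu : Integrable u μ) (hv : Integrable v μ) :
    ∫ x, max (u x) (v x) ∂μ + ∫ x, min (u x) (v x) ∂μ = ∫ x, u x ∂μ + ∫ x, v x ∂μ := by
  have h1 : ∫ x, (max (u x) (v x) + min (u x) (v x)) ∂μ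
      = ∫ x, max (u x) (v x) ∂μ + ∫ x, min (u x) (v x) ∂μ :=
    integral_add (show Integrable (fun x => max (u x) (v x)) μ from hu.sup hv)
      (show Integrable (fun x => min (u x) (v x)) μ from hu.inf hv)
  have h2 : ∫ x, (u x + v x) ∂μ = ∫ x, u x ∂μ + ∫ x, v x ∂μ := integral_add hu hv
  rw [← h1, ← h2]
  exact integral_congr_ae (Filter.Eventually.of_forall fun x => max_add_min _ _)

section LatticeLimit
variable {d : ℕ} (P Q : Measure (Eud d)) [IsProbabilityMeasure P] [IsProbabilityMeasure Q]

lemma lattice_limit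
    (ℓ ℓg : Eud d → ℝ) (hℓi : Integrable ℓ P) (hℓgi : Integrable ℓg Q)
    (D : ℝ)
    (hD : ∀ u v : Eud d → ℝ, Measurable u → Measurable v → Integrable u P → Integrable v Q →
      (∀ᵐ x ∂P, ∀ᵐ y ∂Q, ⟪x, y⟫ ≤ u x + v y) → D ≤ ∫ x, u x ∂P + ∫ y, v y ∂Q)
    (f g : ℕ → Eud d → ℝ)
    (hfm : ∀ k, Measurable (f k)) (hgm : ∀ k, Measurable (g k))
    (hfi : ∀ k, Integrable (f k) P) (hgi : ∀ k, Integrable (g k) Q)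
    (hfeas : ∀ k, ∀ᵐ x ∂P, ∀ᵐ y ∂Q, ⟪x, y⟫ ≤ f k x + g k y)
    (hval : ∀ k, ∫ x, f k x ∂P + ∫ y, g k y ∂Q ≤ D + (2⁻¹ : ℝ) ^ k)
    (hflb : ∀ k, ∀ᵐ x ∂P, ℓ x ≤ f k x)
    (hglb : ∀ k, ∀ᵐ y ∂Q, ℓg y ≤ g k y) :
    ∃ fs gs : Eud d → ℝ, Measurable fs ∧ Measurable gs ∧ Integrable fs P ∧ Integrable gs Q ∧
      (∀ᵐ x ∂P, ∀ᵐ y ∂Q, ⟪x, y⟫ ≤ fs x + gs y) ∧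
      (∫ x, fs x ∂P + ∫ y, gs y ∂Q ≤ D) ∧
      (∀ᵐ y ∂Q, ℓg y ≤ gs y) := by
  classical
  have hflb' : ∀ᵐ x ∂P, ∀ k, ℓ x ≤ f k x := ae_all_iff.2 hflb
  have hglb' : ∀ᵐ y ∂Q, ∀ k, ℓg y ≤ g k y := ae_all_iff.2 hglb
  have hfeas' : ∀ᵐ x ∂P, ∀ᵐ y ∂Q, ∀ k, ⟪x, y⟫ ≤ f k x + g k y := by
    have h1 : ∀ᵐ x ∂P, ∀ k, ∀ᵐ y ∂Q, ⟪x, y⟫ ≤ f k x + g k y := ae_all_iff.2 hfeas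
    filter_upwards [h1] with x hx
    exact ae_all_iff.2 hx
  -- measurability and integrability of windows
  have hFm : ∀ m n, Measurable (winF f m n) := by
    intro m n
    induction n with
    | zero => exact hfm m
    | succ n ih => exact ih.max (hfm (m + n + 1))
  have hGm : ∀ m n, Measurable (winG g m n) := by
    intro m n
    induction n with
    | zero => exact hgm m
    | succ n ih => exact ih.min (hgm (m + n + 1))
  have hFi : ∀ m n, Integrable (winF f m n) P := by
    intro m n
    induction n with
    | zero => exact hfi m
    | succ n ih => exact ih.sup (hfi (m + n + 1))
  have hGi : ∀ m n, Integrable (winG g m n) Q := by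
    intro m n
    induction n with
    | zero => exact hgi m
    | succ n ih => exact ih.inf (hgi (m + n + 1))
  -- window lower bounds (integrals)
  have hWflb : ∀ᵐ x ∂P, ∀ m n, ℓ x ≤ winF f m n x := by
    filter_upwards [hflb'] with x hx m n; exact winF_lb f ℓ m n x hx
  have hWglb : ∀ᵐ y ∂Q, ∀ m n, ℓg y ≤ winG g m n y := by
    filter_upwards [hglb'] with y hy m n; exact winG_lb g ℓg m n y hy
  have hFint_lb : ∀ m n, ∫ x, ℓ x ∂P ≤ ∫ x, winF f m n x ∂P := fun m n =>
    integral_mono_ae hℓi (hFi m n) (hWflb.mono fun x hx => hx m n)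
  have hGint_lb : ∀ m n, ∫ y, ℓg y ∂Q ≤ ∫ y, winG g m n y ∂Q := fun m n =>
    integral_mono_ae hℓgi (hGi m n) (hWglb.mono fun y hy => hy m n)
  -- window value bound
  have hWval : ∀ m n, ∫ x, winF f m n x ∂P + ∫ y, winG g m n y ∂Q
      ≤ D + (2⁻¹ : ℝ) ^ m * (2 - (2⁻¹ : ℝ) ^ n) := by
    intro m n
    induction n with
    | zero =>
        simp only [winF, winG, pow_zero]
        have := hval m
        linarith
    | succ n ih =>
        have hid1 : ∫ x, max (winF f m n x) (f (m+n+1) x) ∂P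
            + ∫ x, min (winF f m n x) (f (m+n+1) x) ∂P
            = ∫ x, winF f m n x ∂P + ∫ x, f (m+n+1) x ∂P :=
          integral_max_add_min (hFi m n) (hfi (m+n+1))
        have hid2 : ∫ y, max (winG g m n y) (g (m+n+1) y) ∂Q
            + ∫ y, min (winG g m n y) (g (m+n+1) y) ∂Q
            = ∫ y, winG g m n y ∂Q + ∫ y, g (m+n+1) y ∂Q :=
          integral_max_add_min (hGi m n) (hgi (m+n+1))
        have hfeas_cross : ∀ᵐ x ∂P, ∀ᵐ y ∂Q,
            ⟪x, y⟫ ≤ min (winF f m n x) (f (m+n+1) x) + max (winG g m n y) (g (m+n+1) y) := by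
          filter_upwards [hfeas'] with x hx
          filter_upwards [hx] with y hy
          exact win_feas_cross f g _ x y hy m n
        have hDlow : D ≤ ∫ x, min (winF f m n x) (f (m+n+1) x) ∂P
            + ∫ y, max (winG g m n y) (g (m+n+1) y) ∂Q :=
          hD _ _ ((hFm m n).min (hfm (m+n+1))) ((hGm m n).max (hgm (m+n+1)))
            ((hFi m n).inf (hfi (m+n+1))) ((hGi m n).sup (hgi (m+n+1))) hfeas_cross
        have hv' := hval (m+n+1)
        have hps : (2⁻¹ : ℝ) ^ (m+n+1) = (2⁻¹ : ℝ) ^ m * ((2⁻¹ : ℝ) ^ n * 2⁻¹) := by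
          rw [show m+n+1 = m + (n+1) by omega, pow_add, pow_succ]
        have hqs : (2⁻¹ : ℝ) ^ (n+1) = (2⁻¹ : ℝ) ^ n * 2⁻¹ := pow_succ _ _
        have goal_eq : ∫ x, winF f m (n+1) x ∂P = ∫ x, max (winF f m n x) (f (m+n+1) x) ∂P := by
          simp only [winF]
        have goal_eq2 : ∫ y, winG g m (n+1) y ∂Q = ∫ y, min (winG g m n y) (g (m+n+1) y) ∂Q := by
          simp only [winG]
        rw [goal_eq, goal_eq2, hqs]
        rw [hps] at hv'
        nlinarith [ih]
  -- uniform integral upper bounds for mono/anti limits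
  have hp_le_one : ∀ m : ℕ, ((2:ℝ)⁻¹) ^ m ≤ 1 := fun m => pow_le_one₀ (by norm_num) (by norm_num)
  have hp_pos : ∀ m : ℕ, (0:ℝ) < ((2:ℝ)⁻¹) ^ m := fun m => pow_pos (by norm_num) m
  have hWval2 : ∀ m n, ∫ x, winF f m n x ∂P + ∫ y, winG g m n y ∂Q
      ≤ D + (2⁻¹ : ℝ) ^ m * 2 := by
    intro m n
    have h1 := hWval m n
    have h2 := hp_pos m
    have h3 := hp_pos n
    nlinarith
  have hFub : ∀ m n, ∫ x, winF f m n x ∂P ≤ D + 2 - ∫ y, ℓg y ∂Q := by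
    intro m n
    have h1 := hWval2 m n
    have h2 := hGint_lb m n
    have h3 := hp_le_one m
    have h4 := hp_pos m
    nlinarith
  -- n-limits
  have hexA : ∀ m, ∃ A : Eud d → ℝ, Measurable A ∧ Integrable A P ∧
      (∀ᵐ x ∂P, Tendsto (fun n => winF f m n x) atTop (nhds (A x))) ∧
      Tendsto (fun n => ∫ x, winF f m n x ∂P) atTop (nhds (∫ x, A x ∂P)) ∧
      (∀ᵐ x ∂P, ∀ n, winF f m n x ≤ A x) := fun m =>
    mono_limit P (fun n => winF f m n) (hFm m) (hFi m)
      (Filter.Eventually.of_forall fun x => winF_mono f m x) _ (hFub m)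
  have hexB : ∀ m, ∃ B : Eud d → ℝ, Measurable B ∧ Integrable B Q ∧
      (∀ᵐ y ∂Q, Tendsto (fun n => winG g m n y) atTop (nhds (B y))) ∧
      Tendsto (fun n => ∫ y, winG g m n y ∂Q) atTop (nhds (∫ y, B y ∂Q)) ∧
      (∀ᵐ y ∂Q, ∀ n, B y ≤ winG g m n y) := fun m =>
    anti_limit Q (fun n => winG g m n) (hGm m) (hGi m)
      (Filter.Eventually.of_forall fun y => winG_anti g m y) _ (hGint_lb m)
  choose A hAm hAi hAt hAit hAle using hexA
  choose B hBm hBi hBt hBit hBle using hexB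
  -- value bound for (A m, B m)
  have hABval : ∀ m, ∫ x, A m x ∂P + ∫ y, B m y ∂Q ≤ D + (2⁻¹ : ℝ) ^ m * 2 := fun m =>
    le_of_tendsto ((hAit m).add (hBit m))
      (Filter.Eventually.of_forall fun n => hWval2 m n)
  -- limit lower bounds
  have hAlb : ∀ m, ∀ᵐ x ∂P, ℓ x ≤ A m x := fun m => by
    filter_upwards [hAt m, hWflb] with x h1 h2
    exact ge_of_tendsto h1 (Filter.Eventually.of_forall fun n => h2 m n)
  have hBlb : ∀ m, ∀ᵐ y ∂Q, ℓg y ≤ B m y := fun m => by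
    filter_upwards [hBt m, hWglb] with y h1 h2
    exact ge_of_tendsto h1 (Filter.Eventually.of_forall fun n => h2 m n)
  have hAint_lb : ∀ m, ∫ x, ℓ x ∂P ≤ ∫ x, A m x ∂P := fun m =>
    integral_mono_ae hℓi (hAi m) (hAlb m)
  have hBint_ub : ∀ m, ∫ y, B m y ∂Q ≤ D + 2 - ∫ x, ℓ x ∂P := by
    intro m
    have h1 := hABval m
    have h2 := hAint_lb m
    have h3 := hp_le_one m
    have h4 := hp_pos m
    nlinarith
  -- monotonicity in m
  have hAanti : ∀ᵐ x ∂P, Antitone fun m => A m x := by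
    filter_upwards [ae_all_iff.2 hAt] with x hx
    refine antitone_nat_of_succ_le fun m => ?_
    exact le_of_tendsto_of_tendsto' (hx (m+1)) ((hx m).comp (tendsto_add_atTop_nat 1))
      (fun n => winF_cross f m n x)
  have hBmono : ∀ᵐ y ∂Q, Monotone fun m => B m y := by
    filter_upwards [ae_all_iff.2 hBt] with y hy
    refine monotone_nat_of_le_succ fun m => ?_
    exact le_of_tendsto_of_tendsto' ((hy m).comp (tendsto_add_atTop_nat 1)) (hy (m+1))
      (fun n => winG_cross g m n y)
  -- m-limits
  obtain ⟨fs, hfsm, hfsi, hfst, hfsit, hfsle⟩ :=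
    anti_limit P A hAm hAi hAanti _ hAint_lb
  obtain ⟨gs, hgsm, hgsi, hgst, hgsit, hgsle⟩ :=
    mono_limit Q B hBm hBi hBmono _ hBint_ub
  -- final value bound
  have hgeo : Tendsto (fun m : ℕ => D + (2⁻¹ : ℝ) ^ m * 2) atTop (nhds D) := by
    have h0 : Tendsto (fun m : ℕ => ((2:ℝ)⁻¹) ^ m) atTop (nhds 0) :=
      tendsto_pow_atTop_nhds_zero_of_lt_one (by norm_num) (by norm_num)
    have := (h0.mul_const 2).const_add D
    simpa using this
  have hfinval : ∫ x, fs x ∂P + ∫ y, gs y ∂Q ≤ D :=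
    le_of_tendsto_of_tendsto' (hfsit.add hgsit) hgeo hABval
  -- gs lower bound
  have hgslb : ∀ᵐ y ∂Q, ℓg y ≤ gs y := by
    filter_upwards [hgsle, hBlb 0] with y h1 h2
    exact le_trans h2 (h1 0)
  -- feasibility
  have hfeas_final : ∀ᵐ x ∂P, ∀ᵐ y ∂Q, ⟪x, y⟫ ≤ fs x + gs y := by
    filter_upwards [hfeas', ae_all_iff.2 hAt, hfst] with x hx hxA hxfs
    filter_upwards [hx, ae_all_iff.2 hBt, hgst] with y hy hyB hygs
    have hm : ∀ m, ⟪x, y⟫ ≤ A m x + B m y := by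
      intro m
      refine ge_of_tendsto ((hxA m).add (hyB m)) (Filter.Eventually.of_forall fun n => ?_)
      exact win_feas f g _ x y hy m n
    exact ge_of_tendsto (hxfs.add hygs) (Filter.Eventually.of_forall hm)
  exact ⟨fs, gs, hfsm, hgsm, hfsi, hgsi, hfeas_final, hfinval, hgslb⟩

end LatticeLimit
section Construct
variable {d : ℕ} (P Q : Measure (Eud d)) [IsProbabilityMeasure P] [IsProbabilityMeasure Q]

lemma construct_pair
    (hP2 : Integrable (fun x : Eud d => ‖x‖ ^ 2) P)
    (hQ2 : Integrable (fun y : Eud d => ‖y‖ ^ 2) Q)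
    (fs gs : Eud d → ℝ) (hfsm : Measurable fs) (hgsm : Measurable gs)
    (hfsi : Integrable fs P) (hgsi : Integrable gs Q)
    (hfeas : ∀ᵐ x ∂P, ∀ᵐ y ∂Q, ⟪x, y⟫ ≤ fs x + gs y)
    (zP : Eud d) (c : ℝ) (hglb : ∀ᵐ y ∂Q, ⟪zP, y⟫ - c ≤ gs y) :
    ∃ (φ ψ : Eud d → EReal),
      (∀ x, φ x ≠ ⊥) ∧ (∃ x, φ x ≠ ⊤) ∧
      LowerSemicontinuous φ ∧ IsConvexEReal φ ∧
      (∀ y, ψ y = ⨆ x, ((⟪x, y⟫ : ℝ) : EReal) - φ x) ∧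
      (∀ x, φ x = ⨆ y, ((⟪x, y⟫ : ℝ) : EReal) - ψ y) ∧
      (∀ᵐ x ∂P, φ x ≠ ⊤) ∧ (∀ᵐ y ∂Q, ψ y ≠ ⊤) ∧
      Integrable (fun x => (φ x).toReal) P ∧ Integrable (fun y => (ψ y).toReal) Q ∧
      (∀ᵐ x ∂P, ∀ᵐ y ∂Q, ⟪x, y⟫ ≤ (φ x).toReal + (ψ y).toReal) ∧
      (∫ x, (φ x).toReal ∂P + ∫ y, (ψ y).toReal ∂Q ≤ ∫ x, fs x ∂P + ∫ y, gs y ∂Q) := by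
  classical
  -- a ball of positive measure
  obtain ⟨ρ₀, hρ₀⟩ : ∃ ρ₀ : ℕ, 0 < Q (Metric.closedBall (0 : Eud d) ρ₀) := by
    by_contra hcon
    push_neg at hcon
    have h0 : ∀ ρ : ℕ, Q (Metric.closedBall (0 : Eud d) ρ) = 0 := fun ρ =>
      le_antisymm (hcon ρ) zero_le
    have huniv : (Set.univ : Set (Eud d)) = ⋃ ρ : ℕ, Metric.closedBall (0 : Eud d) ρ := by
      ext y
      simp only [Set.mem_univ, Set.mem_iUnion, true_iff, Metric.mem_closedBall]
      obtain ⟨n, hn⟩ := exists_nat_ge (dist y 0)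
      exact ⟨n, hn⟩
    have : Q Set.univ = 0 := by
      rw [huniv]
      exact measure_iUnion_null h0
    simp at this
  set B : ℕ → Set (Eud d) := fun ρ => Metric.closedBall (0 : Eud d) ((ρ₀ : ℝ) + ρ) with hB
  have hBmeas : ∀ ρ, MeasurableSet (B ρ) := fun ρ => measurableSet_closedBall
  have hBsub : ∀ ρ, B 0 ⊆ B ρ := fun ρ =>
    Metric.closedBall_subset_closedBall (by push_cast; linarith [Nat.cast_nonneg (α := ℝ) ρ])
  have hB0 : 0 < Q (B 0) := by
    simpa [hB] using hρ₀
  have hBrne : ∀ ρ, Q.restrict (B ρ) ≠ 0 := by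
    intro ρ
    rw [← Measure.measure_univ_ne_zero, Measure.restrict_apply_univ]
    exact fun h => absurd (le_antisymm (h ▸ (measure_mono (hBsub ρ))) zero_le)
      (ne_of_gt hB0)
  haveI : ∀ ρ, (ae (Q.restrict (B ρ))).NeBot := fun ρ => ae_neBot.2 (hBrne ρ)
  -- the Lipschitz essential conjugates
  set u : ℕ → Eud d → EReal := fun ρ x =>
    essSup (fun y => ((⟪x, y⟫ - gs y : ℝ) : EReal)) (Q.restrict (B ρ)) with hu
  have hu_ub : ∀ ρ x, u ρ x ≤ ((‖x - zP‖ * ((ρ₀ : ℝ) + ρ) + c : ℝ) : EReal) := by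
    intro ρ x
    refine essSup_le_of_ae_le _ ?_
    filter_upwards [ae_restrict_mem (hBmeas ρ), ae_restrict_of_ae hglb] with y hy1 hy2
    rw [EReal.coe_le_coe_iff]
    have h1 : ‖y‖ ≤ (ρ₀ : ℝ) + ρ := by
      rw [← mem_closedBall_zero_iff]
      exact hy1
    have h2 : ⟪x, y⟫ - gs y ≤ ⟪x, y⟫ - ⟪zP, y⟫ + c := by linarith
    have h3 : ⟪x, y⟫ - ⟪zP, y⟫ = ⟪x - zP, y⟫ := (inner_sub_left x zP y).symm
    have h4 : ⟪x - zP, y⟫ ≤ ‖x - zP‖ * ‖y‖ := real_inner_le_norm _ _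
    have h5 : ‖x - zP‖ * ‖y‖ ≤ ‖x - zP‖ * ((ρ₀ : ℝ) + ρ) :=
      mul_le_mul_of_nonneg_left h1 (norm_nonneg _)
    linarith
  have hu_ne_bot : ∀ ρ x, u ρ x ≠ ⊥ := by
    intro ρ x hbot
    have h1 : ∀ᵐ y ∂(Q.restrict (B ρ)), ((⟪x, y⟫ - gs y : ℝ) : EReal) ≤ u ρ x :=
      ae_le_essSup
    rw [hbot] at h1
    obtain ⟨y, hy⟩ := h1.exists
    exact absurd (le_bot_iff.1 hy) (EReal.coe_ne_bot _)
  have hu_ne_top : ∀ ρ x, u ρ x ≠ ⊤ := fun ρ x =>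
    ne_top_of_le_ne_top (EReal.coe_ne_top _) (hu_ub ρ x)
  set w : ℕ → Eud d → ℝ := fun ρ x => (u ρ x).toReal with hw
  have hu_eq : ∀ ρ x, u ρ x = ((w ρ x : ℝ) : EReal) := fun ρ x =>
    (EReal.coe_toReal (hu_ne_top ρ x) (hu_ne_bot ρ x)).symm
  -- essential upper bound property at each x
  have hw_ae : ∀ ρ x, ∀ᵐ y ∂(Q.restrict (B ρ)), ⟪x, y⟫ - gs y ≤ w ρ x := by
    intro ρ x
    have h1 : ∀ᵐ y ∂(Q.restrict (B ρ)), ((⟪x, y⟫ - gs y : ℝ) : EReal) ≤ u ρ x :=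
      ae_le_essSup
    filter_upwards [h1] with y hy
    rw [hu_eq ρ x, EReal.coe_le_coe_iff] at hy
    exact hy
  -- Lipschitz property
  have hw_lip : ∀ ρ x x', w ρ x ≤ w ρ x' + ((ρ₀ : ℝ) + ρ) * ‖x - x'‖ := by
    intro ρ x x'
    have h1 : u ρ x ≤ ((w ρ x' + ((ρ₀ : ℝ) + ρ) * ‖x - x'‖ : ℝ) : EReal) := by
      refine essSup_le_of_ae_le _ ?_
      filter_upwards [ae_restrict_mem (hBmeas ρ), hw_ae ρ x'] with y hy1 hy2
      rw [EReal.coe_le_coe_iff]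
      have hn : ‖y‖ ≤ (ρ₀ : ℝ) + ρ := by
        rw [← mem_closedBall_zero_iff]; exact hy1
      have h3 : ⟪x, y⟫ - ⟪x', y⟫ = ⟪x - x', y⟫ := (inner_sub_left x x' y).symm
      have h4 : ⟪x - x', y⟫ ≤ ‖x - x'‖ * ‖y‖ := real_inner_le_norm _ _
      have h5 : ‖x - x'‖ * ‖y‖ ≤ ‖x - x'‖ * ((ρ₀ : ℝ) + ρ) :=
        mul_le_mul_of_nonneg_left hn (norm_nonneg _)
      nlinarith [h4, h5]
    rw [hu_eq ρ x, EReal.coe_le_coe_iff] at h1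
    linarith [h1]
  have hw_cont : ∀ ρ, Continuous (w ρ) := by
    intro ρ
    have hK : (0:ℝ) ≤ (ρ₀ : ℝ) + ρ := by positivity
    refine (LipschitzWith.of_dist_le_mul (K := Real.toNNReal ((ρ₀ : ℝ) + ρ)) ?_).continuous
    intro x x'
    rw [Real.dist_eq, abs_le, Real.coe_toNNReal _ hK]
    constructor
    · have := hw_lip ρ x' x
      rw [dist_eq_norm, ← norm_neg]
      simp only [neg_sub]
      linarith [hw_lip ρ x' x]
    · rw [dist_eq_norm]
      linarith [hw_lip ρ x x']

  -- w ≤ fs a.e.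
  have hw_le_fs : ∀ ρ, ∀ᵐ x ∂P, w ρ x ≤ fs x := by
    intro ρ
    filter_upwards [hfeas] with x hx
    have h1 : u ρ x ≤ ((fs x : ℝ) : EReal) := by
      refine essSup_le_of_ae_le _ ?_
      filter_upwards [ae_restrict_of_ae hx] with y hy
      rw [EReal.coe_le_coe_iff]
      linarith
    rw [hu_eq ρ x, EReal.coe_le_coe_iff] at h1
    exact h1
  -- affine minorant, uniform in ρ
  set t0 : ℝ := (Q (B 0)).toReal with ht0_def
  have ht0 : 0 < t0 := ENNReal.toReal_pos (ne_of_gt hB0) (measure_ne_top Q _)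
  set ζ : Eud d := ∫ y in B 0, y ∂Q with hζ
  set γ : ℝ := ∫ y in B 0, gs y ∂Q with hγ
  set z₀ : Eud d := t0⁻¹ • ζ with hz₀
  set c₀ : ℝ := t0⁻¹ * γ with hc₀
  have hw_lb : ∀ ρ x, ⟪x, z₀⟫ - c₀ ≤ w ρ x := by
    intro ρ x
    have hae : ∀ᵐ y ∂(Q.restrict (B 0)), ⟪x, y⟫ - gs y ≤ w ρ x :=
      ae_restrict_of_ae_restrict_of_subset (hBsub ρ) (hw_ae ρ x)
    have hii : Integrable (fun y => ⟪x, y⟫) (Q.restrict (B 0)) :=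
      ((integrable_id' Q hQ2).restrict).const_inner x
    have h2 : ∫ y in B 0, (⟪x, y⟫ - gs y) ∂Q ≤ ∫ _ in B 0, w ρ x ∂Q :=
      integral_mono_ae (hii.sub hgsi.restrict) (integrable_const _) hae
    rw [integral_sub hii hgsi.restrict, integral_const,
      integral_inner ((integrable_id' Q hQ2).restrict) x,
      measureReal_restrict_apply_univ, smul_eq_mul] at h2
    have h3 : ⟪x, z₀⟫ = t0⁻¹ * ⟪x, ζ⟫ := real_inner_smul_right x ζ t0⁻¹
    have h4 : t0⁻¹ * (⟪x, ζ⟫ - γ) ≤ t0⁻¹ * (t0 * w ρ x) :=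
      mul_le_mul_of_nonneg_left h2 (inv_nonneg.2 ht0.le)
    have h5 : t0⁻¹ * (t0 * w ρ x) = w ρ x := by field_simp
    have h6 : ⟪x, z₀⟫ - c₀ = t0⁻¹ * (⟪x, ζ⟫ - γ) := by rw [h3, hc₀]; ring
    rw [h6]
    rw [h5] at h4
    exact h4
  -- the conjugate pair
  set φ₁ : Eud d → EReal := fun x => ⨆ ρ : ℕ, ((w ρ x : ℝ) : EReal) with hφ₁def
  set ψ : Eud d → EReal := econj φ₁ with hψdef
  set φ : Eud d → EReal := econj ψ with hφdef
  have hψφ : ∀ y, ψ y = econj φ y := by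
    intro y
    rw [hψdef, hφdef, hψdef, econj_triple φ₁]
  have hφ₁_lb : ∀ x, ((⟪x, z₀⟫ - c₀ : ℝ) : EReal) ≤ φ₁ x := fun x =>
    le_trans (EReal.coe_le_coe_iff.2 (hw_lb 0 x)) (le_iSup (fun ρ => ((w ρ x : ℝ) : EReal)) 0)
  have hφ_lb : ∀ x, ((⟪x, z₀⟫ - c₀ : ℝ) : EReal) ≤ φ x := le_econj_biconj hφ₁_lb
  have hφ_ne_bot : ∀ x, φ x ≠ ⊥ := by
    intro x hx
    have := hφ_lb x
    rw [hx, le_bot_iff] at this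
    exact EReal.coe_ne_bot _ this
  have hφ_le_φ₁ : ∀ x, φ x ≤ φ₁ x := econj_biconj_le φ₁
  have hφ₁_le_fs : ∀ᵐ x ∂P, φ₁ x ≤ ((fs x : ℝ) : EReal) := by
    filter_upwards [ae_all_iff.2 hw_le_fs] with x hx
    exact iSup_le fun ρ => EReal.coe_le_coe_iff.2 (hx ρ)
  have hφ_ne_top : ∀ᵐ x ∂P, φ x ≠ ⊤ := by
    filter_upwards [hφ₁_le_fs] with x hx
    exact ne_top_of_le_ne_top (EReal.coe_ne_top _) (le_trans (hφ_le_φ₁ x) hx)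
  haveI : (ae P).NeBot := ae_neBot.2 (IsProbabilityMeasure.ne_zero P)
  haveI : (ae Q).NeBot := ae_neBot.2 (IsProbabilityMeasure.ne_zero Q)
  have hex_fin : ∃ x, φ x ≠ ⊤ := hφ_ne_top.exists
  -- ψ ≤ gs a.e.
  obtain ⟨dseq, hdseq⟩ := TopologicalSpace.exists_dense_seq (Eud d)
  have hψ_le_w : ∀ ρ y, ψ y ≤ econj (fun x => ((w ρ x : ℝ) : EReal)) y := fun ρ y =>
    econj_antitone (fun x => le_iSup (fun ρ' => ((w ρ' x : ℝ) : EReal)) ρ) y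
  have hψ_gs_ρ : ∀ ρ, ∀ᵐ y ∂(Q.restrict (B ρ)), ψ y ≤ ((gs y : ℝ) : EReal) := by
    intro ρ
    have hae2 : ∀ᵐ y ∂(Q.restrict (B ρ)), ∀ n, ⟪dseq n, y⟫ - gs y ≤ w ρ (dseq n) :=
      ae_all_iff.2 fun n => hw_ae ρ (dseq n)
    filter_upwards [hae2] with y hy
    refine le_trans (hψ_le_w ρ y) ?_
    rw [econj_coe_dense_sup (hw_cont ρ) hdseq y]
    exact iSup_le fun n => EReal.coe_le_coe_iff.2 (by linarith [hy n])
  have hψm : Measurable ψ := (econj_lsc φ₁).measurable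
  have hψ_le_gs : ∀ᵐ y ∂Q, ψ y ≤ ((gs y : ℝ) : EReal) := by
    have hbadm : MeasurableSet {y | ¬ ψ y ≤ ((gs y : ℝ) : EReal)} := by
      have heq : {y | ¬ ψ y ≤ ((gs y : ℝ) : EReal)} = {y | ((gs y : ℝ) : EReal) < ψ y} := by
        ext y; simp [not_le]
      rw [heq]
      exact measurableSet_lt hgsm.coe_real_ereal hψm
    have hcov : {y | ¬ ψ y ≤ ((gs y : ℝ) : EReal)}
        ⊆ ⋃ ρ : ℕ, {y | ¬ ψ y ≤ ((gs y : ℝ) : EReal)} ∩ B ρ := by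
      intro y hy
      simp only [Set.mem_iUnion, Set.mem_inter_iff]
      obtain ⟨n, hn⟩ := exists_nat_ge (‖y‖)
      refine ⟨n, hy, ?_⟩
      rw [hB]
      simp only [mem_closedBall_zero_iff]
      have h0 : (0:ℝ) ≤ (ρ₀:ℝ) := Nat.cast_nonneg ρ₀
      linarith
    have hnull : ∀ ρ : ℕ, Q ({y | ¬ ψ y ≤ ((gs y : ℝ) : EReal)} ∩ B ρ) = 0 := by
      intro ρ
      have h1 := ae_iff.1 (hψ_gs_ρ ρ)
      rw [Measure.restrict_apply hbadm] at h1
      exact h1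
    exact ae_iff.2 (measure_mono_null hcov (measure_iUnion_null hnull))
  have hψ_ne_top : ∀ᵐ y ∂Q, ψ y ≠ ⊤ := by
    filter_upwards [hψ_le_gs] with y hy
    exact ne_top_of_le_ne_top (EReal.coe_ne_top _) hy
  -- affine minorant for ψ
  have hφ₁_fin : ∀ᵐ x ∂P, φ₁ x ≠ ⊤ ∧ φ₁ x ≠ ⊥ := by
    filter_upwards [hφ₁_le_fs] with x hx
    refine ⟨ne_top_of_le_ne_top (EReal.coe_ne_top _) hx, ?_⟩
    intro hbot
    have := hφ₁_lb x
    rw [hbot, le_bot_iff] at this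
    exact EReal.coe_ne_bot _ this
  obtain ⟨x₀, hx₀⟩ := hφ₁_fin.exists
  set t₀ : ℝ := (φ₁ x₀).toReal with ht₀def
  have hψ_lb : ∀ y, ((⟪x₀, y⟫ - t₀ : ℝ) : EReal) ≤ ψ y := by
    intro y
    have h1 := le_econj φ₁ x₀ y
    rw [← EReal.coe_toReal hx₀.1 hx₀.2, ← EReal.coe_sub] at h1
    exact h1
  have hψ_ne_bot : ∀ y, ψ y ≠ ⊥ := by
    intro y hy
    have := hψ_lb y
    rw [hy, le_bot_iff] at this
    exact EReal.coe_ne_bot _ this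
  -- conjugation formulas
  have hψ_eq : ∀ y, ψ y = ⨆ x, ((⟪x, y⟫ : ℝ) : EReal) - φ x := hψφ
  have hφ_eq : ∀ x, φ x = ⨆ y, ((⟪x, y⟫ : ℝ) : EReal) - ψ y := by
    intro x
    rw [hφdef]
    show econj ψ x = _
    rw [econj]
    exact iSup_congr fun y => by rw [real_inner_comm]
  -- integrability of real versions
  have hφm : Measurable φ := (econj_lsc ψ).measurable
  have hℓφi : Integrable (fun x => ⟪x, z₀⟫ - c₀) P :=
    (integrable_inner_left P hP2 z₀).sub (integrable_const c₀)
  have hℓψi : Integrable (fun y => ⟪x₀, y⟫ - t₀) Q :=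
    ((integrable_id' Q hQ2).const_inner x₀).sub (integrable_const t₀)
  have hφtR_bounds : ∀ᵐ x ∂P, (⟪x, z₀⟫ - c₀ ≤ (φ x).toReal ∧ (φ x).toReal ≤ fs x) := by
    filter_upwards [hφ_ne_top, hφ₁_le_fs] with x hx1 hx2
    constructor
    · have h5 := EReal.toReal_le_toReal (hφ_lb x) (EReal.coe_ne_bot _) hx1
      rwa [EReal.toReal_coe] at h5
    · have h3 : φ x ≤ ((fs x : ℝ) : EReal) := le_trans (hφ_le_φ₁ x) hx2
      have h5 := EReal.toReal_le_toReal h3 (hφ_ne_bot x) (EReal.coe_ne_top _)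
      rwa [EReal.toReal_coe] at h5
  have hψtR_bounds : ∀ᵐ y ∂Q, (⟪x₀, y⟫ - t₀ ≤ (ψ y).toReal ∧ (ψ y).toReal ≤ gs y) := by
    filter_upwards [hψ_ne_top, hψ_le_gs] with y hy1 hy2
    constructor
    · have h5 := EReal.toReal_le_toReal (hψ_lb y) (EReal.coe_ne_bot _) hy1
      rwa [EReal.toReal_coe] at h5
    · have h5 := EReal.toReal_le_toReal hy2 (hψ_ne_bot y) (EReal.coe_ne_top _)
      rwa [EReal.toReal_coe] at h5
  have hφtR_int : Integrable (fun x => (φ x).toReal) P := by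
    refine Integrable.mono' (hℓφi.abs.add hfsi.abs) hφm.ereal_toReal.aestronglyMeasurable ?_
    filter_upwards [hφtR_bounds] with x hx
    simp only [Pi.add_apply]
    rw [Real.norm_eq_abs, abs_le]
    have h1 := neg_abs_le (⟪x, z₀⟫ - c₀)
    have h2 := le_abs_self (fs x)
    have h3 := abs_nonneg (⟪x, z₀⟫ - c₀)
    have h4 := abs_nonneg (fs x)
    constructor <;> [linarith [hx.1]; linarith [hx.2]]
  have hψtR_int : Integrable (fun y => (ψ y).toReal) Q := by
    refine Integrable.mono' (hℓψi.abs.add hgsi.abs) hψm.ereal_toReal.aestronglyMeasurable ?_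
    filter_upwards [hψtR_bounds] with y hy
    simp only [Pi.add_apply]
    rw [Real.norm_eq_abs, abs_le]
    have h1 := neg_abs_le (⟪x₀, y⟫ - t₀)
    have h2 := le_abs_self (gs y)
    have h3 := abs_nonneg (⟪x₀, y⟫ - t₀)
    have h4 := abs_nonneg (gs y)
    constructor <;> [linarith [hy.1]; linarith [hy.2]]
  -- feasibility of the real versions
  have hfeas_final : ∀ᵐ x ∂P, ∀ᵐ y ∂Q, ⟪x, y⟫ ≤ (φ x).toReal + (ψ y).toReal := by
    filter_upwards [hφ_ne_top] with x hx
    filter_upwards [hψ_ne_top] with y hy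
    have h1 : ((⟪y, x⟫ : ℝ) : EReal) - ψ y ≤ φ x := le_econj ψ y x
    rw [← EReal.coe_toReal hy (hψ_ne_bot y), ← EReal.coe_sub,
      ← EReal.coe_toReal hx (hφ_ne_bot x), EReal.coe_le_coe_iff] at h1
    rw [real_inner_comm] at h1
    linarith
  -- value comparison
  have hval_final : ∫ x, (φ x).toReal ∂P + ∫ y, (ψ y).toReal ∂Q
      ≤ ∫ x, fs x ∂P + ∫ y, gs y ∂Q := by
    have h1 : ∫ x, (φ x).toReal ∂P ≤ ∫ x, fs x ∂P :=
      integral_mono_ae hφtR_int hfsi (hφtR_bounds.mono fun x hx => hx.2)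
    have h2 : ∫ y, (ψ y).toReal ∂Q ≤ ∫ y, gs y ∂Q :=
      integral_mono_ae hψtR_int hgsi (hψtR_bounds.mono fun y hy => hy.2)
    linarith
  exact ⟨φ, ψ, hφ_ne_bot, hex_fin, econj_lsc ψ, econj_convex ψ, hψ_eq, hφ_eq,
    hφ_ne_top, hψ_ne_top, hφtR_int, hψtR_int, hfeas_final, hval_final⟩

end Construct

/-- Conjugate structure of dual solutions for the scalar product surplus: for `P`, `Q`
Borel probability measures on `ℝ^d` with finite second moments and `Φ(x,y) = ⟪x,y⟫`,
there is a dual minimizer `(φ, ψ)` with `φ` proper, lower semicontinuous and convex,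
`ψ = φ*` its Legendre–Fenchel conjugate, and `φ = ψ*`. -/
theorem mk_scalar_product_conjugate_dual
    {d : ℕ} (P Q : Measure (EuclideanSpace ℝ (Fin d)))
    [IsProbabilityMeasure P] [IsProbabilityMeasure Q]
    (hP2 : Integrable (fun x => ‖x‖ ^ 2) P) (hQ2 : Integrable (fun y => ‖y‖ ^ 2) Q) :
    ∃ (φ ψ : EuclideanSpace ℝ (Fin d) → EReal),
      -- φ is proper: nowhere −∞ and somewhere finite
      (∀ x, φ x ≠ ⊥) ∧ (∃ x, φ x ≠ ⊤) ∧
      -- φ is lower semicontinuous and convex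
      LowerSemicontinuous φ ∧ IsConvexEReal φ ∧
      -- ψ = φ* and φ = ψ* (Legendre–Fenchel conjugation)
      (∀ y, ψ y = ⨆ x, ((⟪x, y⟫ : ℝ) : EReal) - φ x) ∧
      (∀ x, φ x = ⨆ y, ((⟪x, y⟫ : ℝ) : EReal) - ψ y) ∧
      -- φ and ψ are a.e. finite, with integrable real versions ...
      (∀ᵐ x ∂P, φ x ≠ ⊤) ∧ (∀ᵐ y ∂Q, ψ y ≠ ⊤) ∧
      Integrable (fun x => (φ x).toReal) P ∧ Integrable (fun y => (ψ y).toReal) Q ∧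
      -- ... which form a feasible pair for the dual problem ...
      (∀ᵐ x ∂P, ∀ᵐ y ∂Q, ⟪x, y⟫ ≤ (φ x).toReal + (ψ y).toReal) ∧
      -- ... that minimizes the dual objective among all feasible pairs
      (∀ (φ' : EuclideanSpace ℝ (Fin d) → ℝ) (ψ' : EuclideanSpace ℝ (Fin d) → ℝ),
        Measurable φ' → Measurable ψ' → Integrable φ' P → Integrable ψ' Q →
        (∀ᵐ x ∂P, ∀ᵐ y ∂Q, ⟪x, y⟫ ≤ φ' x + ψ' y) →
        ∫ x, (φ x).toReal ∂P + ∫ y, (ψ y).toReal ∂Q ≤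
          ∫ x, φ' x ∂P + ∫ y, ψ' y ∂Q) := by
  classical
  set S : Set ℝ := {v | ∃ u u' : Eud d → ℝ, Measurable u ∧ Measurable u' ∧
    Integrable u P ∧ Integrable u' Q ∧
    (∀ᵐ x ∂P, ∀ᵐ y ∂Q, ⟪x, y⟫ ≤ u x + u' y) ∧ ∫ x, u x ∂P + ∫ y, u' y ∂Q = v} with hS
  have hSne : S.Nonempty := by
    refine ⟨_, (fun x : Eud d => (1/2) * ‖x‖ ^ 2), (fun y : Eud d => (1/2) * ‖y‖ ^ 2),
      (measurable_norm.pow_const 2).const_mul _, (measurable_norm.pow_const 2).const_mul _,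
      hP2.const_mul _, hQ2.const_mul _, ?_, rfl⟩
    refine Filter.Eventually.of_forall fun x => Filter.Eventually.of_forall fun y => ?_
    have h1 : ⟪x, y⟫ ≤ ‖x‖ * ‖y‖ := real_inner_le_norm x y
    nlinarith [sq_nonneg (‖x‖ - ‖y‖), norm_nonneg x, norm_nonneg y]
  have hSbdd : BddBelow S := by
    refine ⟨⟪∫ x, x ∂P, ∫ y, y ∂Q⟫, ?_⟩
    rintro v ⟨u, u', hm1, hm2, hi1, hi2, hfe, rfl⟩
    exact comp_lower_bound P Q hP2 hQ2 hi1 hi2 hfe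
  set D : ℝ := sInf S with hD
  have hD_le : ∀ u u' : Eud d → ℝ, Measurable u → Measurable u' → Integrable u P →
      Integrable u' Q → (∀ᵐ x ∂P, ∀ᵐ y ∂Q, ⟪x, y⟫ ≤ u x + u' y) →
      D ≤ ∫ x, u x ∂P + ∫ y, u' y ∂Q := by
    intro u u' hm1 hm2 hi1 hi2 hfe
    exact csInf_le hSbdd ⟨u, u', hm1, hm2, hi1, hi2, hfe, rfl⟩
  have hseq : ∀ k : ℕ, ∃ u u' : Eud d → ℝ, Measurable u ∧ Measurable u' ∧
      Integrable u P ∧ Integrable u' Q ∧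
      (∀ᵐ x ∂P, ∀ᵐ y ∂Q, ⟪x, y⟫ ≤ u x + u' y) ∧
      ∫ x, u x ∂P + ∫ y, u' y ∂Q ≤ D + (2⁻¹ : ℝ) ^ k := by
    intro k
    have hlt : D < D + (2⁻¹ : ℝ) ^ k := by
      have : (0:ℝ) < (2⁻¹ : ℝ) ^ k := pow_pos (by norm_num) k
      linarith
    obtain ⟨v, hvS, hvlt⟩ := exists_lt_of_csInf_lt hSne hlt
    obtain ⟨u, u', hm1, hm2, hi1, hi2, hfe, hveq⟩ := hvS
    exact ⟨u, u', hm1, hm2, hi1, hi2, hfe, by rw [hveq]; exact hvlt.le⟩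
  choose f0 g0 hf0m hg0m hf0i hg0i hfe0 hv0 using hseq
  -- normalization
  set f : ℕ → Eud d → ℝ := fun k x => f0 k x + ∫ y, g0 k y ∂Q with hf
  set g : ℕ → Eud d → ℝ := fun k y => g0 k y - ∫ y, g0 k y ∂Q with hg
  have hfm : ∀ k, Measurable (f k) := fun k => (hf0m k).add_const _
  have hgm : ∀ k, Measurable (g k) := fun k => (hg0m k).sub_const _
  have hfi : ∀ k, Integrable (f k) P := fun k => (hf0i k).add (integrable_const _)
  have hgi : ∀ k, Integrable (g k) Q := fun k => (hg0i k).sub (integrable_const _)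
  have hfeas : ∀ k, ∀ᵐ x ∂P, ∀ᵐ y ∂Q, ⟪x, y⟫ ≤ f k x + g k y := by
    intro k
    filter_upwards [hfe0 k] with x hx
    filter_upwards [hx] with y hy
    simp only [hf, hg]
    linarith
  have hgk0 : ∀ k, ∫ y, g k y ∂Q = 0 := by
    intro k
    simp only [hg]
    rw [integral_sub (hg0i k) (integrable_const _), integral_const]
    simp
  have hfk_int : ∀ k, ∫ x, f k x ∂P = ∫ x, f0 k x ∂P + ∫ y, g0 k y ∂Q := by
    intro k
    simp only [hf]
    rw [integral_add (hf0i k) (integrable_const _), integral_const]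
    simp
  have hval : ∀ k, ∫ x, f k x ∂P + ∫ y, g k y ∂Q ≤ D + (2⁻¹ : ℝ) ^ k := by
    intro k
    rw [hgk0 k, hfk_int k]
    have := hv0 k
    linarith
  have hfk_ub : ∀ k, ∫ x, f k x ∂P ≤ D + 1 := by
    intro k
    have h1 := hval k
    have h2 : (2⁻¹ : ℝ) ^ k ≤ 1 := pow_le_one₀ (by norm_num) (by norm_num)
    have h3 := hgk0 k
    linarith
  -- lower bounds
  set mP : Eud d := ∫ x, x ∂P with hmP
  set mQ : Eud d := ∫ y, y ∂Q with hmQ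
  have hflb : ∀ k, ∀ᵐ x ∂P, ⟪x, mQ⟫ ≤ f k x := by
    intro k
    filter_upwards [feas_avg_right P Q hQ2 (hgi k) (hfeas k)] with x hx
    rw [hgk0 k] at hx
    linarith
  have hglb : ∀ k, ∀ᵐ y ∂Q, ⟪mP, y⟫ - (D + 1) ≤ g k y := by
    intro k
    have hswap := feas_swap P Q (hfm k) (hgm k) (hfeas k)
    have hswap' : ∀ᵐ y ∂Q, ∀ᵐ x ∂P, ⟪y, x⟫ ≤ g k y + f k x := by
      filter_upwards [hswap] with y hy
      filter_upwards [hy] with x hx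
      rw [real_inner_comm]
      linarith
    filter_upwards [feas_avg_right Q P hP2 (hfi k) hswap'] with y hy
    have h2 := hfk_ub k
    rw [real_inner_comm] at hy
    linarith
  -- limit of the lattice-improved sequence
  obtain ⟨fs, gs, hfsm, hgsm, hfsi, hgsi, hfeas_s, hvals, hgslb⟩ :=
    lattice_limit P Q (fun x => ⟪x, mQ⟫) (fun y => ⟪mP, y⟫ - (D + 1))
      (integrable_inner_left P hP2 mQ)
      (((integrable_id' Q hQ2).const_inner mP).sub (integrable_const _))
      D hD_le f g hfm hgm hfi hgi hfeas hval hflb hglb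
  -- the conjugate pair
  obtain ⟨φ, ψ, h1, h2, h3, h4, h5, h6, h7, h8, h9, h10, h11, h12⟩ :=
    construct_pair P Q hP2 hQ2 fs gs hfsm hgsm hfsi hgsi hfeas_s mP (D + 1) hgslb
  refine ⟨φ, ψ, h1, h2, h3, h4, h5, h6, h7, h8, h9, h10, h11, ?_⟩
  intro φ' ψ' hφ'm hψ'm hφ'i hψ'i hfeas'
  have hDle : D ≤ ∫ x, φ' x ∂P + ∫ y, ψ' y ∂Q := hD_le φ' ψ' hφ'm hψ'm hφ'i hψ'i hfeas'
  linarith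
end

section
/- Brenier representation of optimal couplings for the scalar product surplus: let P and Q be Borel probability measures on ℝ^d with finite second moments, with P absolutely continuous with respect to Lebesgue measure, and let Φ(x,y) = x⊤y. If π ∈ M(P,Q) is an optimal coupling for the Monge–Kantorovich problem, then there exists a convex function φ : ℝ^d → ℝ ∪ {+∞}, differentiable P-almost everywhere, such that Y = ∇φ(X) holds π-almost surely; equivalently, π is the image of P under the map x ↦ (x, ∇φ(x)), and in particular ∇φ pushes P forward to Q. -/
open MeasureTheory
open scoped RealInnerProductSpace
open Set
open scoped NNReal ENNReal

set_option linter.unusedSectionVars false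

section Aux

def msupp {X : Type*} [TopologicalSpace X] [MeasurableSpace X] (μ : Measure X) : Set X :=
  {x | ∀ U : Set X, IsOpen U → x ∈ U → 0 < μ U}

lemma mem_msupp {X : Type*} [TopologicalSpace X] [MeasurableSpace X] {μ : Measure X} {x : X}
    (hx : x ∈ msupp μ) {U : Set X} (hU : IsOpen U) (hxU : x ∈ U) : 0 < μ U := hx U hU hxU

lemma isClosed_msupp {X : Type*} [TopologicalSpace X] [MeasurableSpace X] (μ : Measure X) :
    IsClosed (msupp μ) := by
  rw [← isOpen_compl_iff, isOpen_iff_mem_nhds]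
  intro x hx
  simp only [msupp, mem_compl_iff, mem_setOf_eq, not_forall] at hx
  obtain ⟨U, hU, hxU, hμU⟩ := hx
  refine Filter.mem_of_superset (hU.mem_nhds hxU) ?_
  intro y hy
  simp only [msupp, mem_compl_iff, mem_setOf_eq, not_forall]
  exact ⟨U, hU, hy, hμU⟩

lemma msupp_compl_null {X : Type*} [TopologicalSpace X] [MeasurableSpace X]
    [SecondCountableTopology X] (μ : Measure X) : μ (msupp μ)ᶜ = 0 := by
  have hrepr : (msupp μ)ᶜ = ⋃ U : {U : Set X // IsOpen U ∧ μ U = 0}, (U : Set X) := by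
    ext x
    simp only [msupp, mem_compl_iff, mem_setOf_eq, not_forall, mem_iUnion]
    constructor
    · rintro ⟨U, hU, hxU, hμU⟩
      exact ⟨⟨U, hU, by simpa using hμU⟩, hxU⟩
    · rintro ⟨⟨U, hU, hμU⟩, hxU⟩
      exact ⟨U, hU, hxU, by simp [hμU]⟩
  obtain ⟨T, hTc, hT⟩ := TopologicalSpace.isOpen_iUnion_countable
    (fun U : {U : Set X // IsOpen U ∧ μ U = 0} => (U : Set X)) (fun U => U.2.1)
  rw [hrepr, ← hT]
  exact (measure_biUnion_null_iff hTc).2 fun U _ => U.2.2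

lemma msupp_nonempty {X : Type*} [TopologicalSpace X] [MeasurableSpace X]
    [SecondCountableTopology X] (μ : Measure X) [IsProbabilityMeasure μ] :
    (msupp μ).Nonempty := by
  by_contra h
  rw [not_nonempty_iff_eq_empty] at h
  have h2 := msupp_compl_null μ
  rw [h, compl_empty] at h2
  simpa [h2] using (measure_univ (μ := μ))

variable {E : Type*} [NormedAddCommGroup E] [InnerProductSpace ℝ E]
  [MeasurableSpace E] [BorelSpace E] [SecondCountableTopology E]

lemma inner_est {x y u v : E} {R δ : ℝ} (hR0 : 0 ≤ R) (hδ0 : 0 ≤ δ)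
    (hx : ‖x‖ ≤ R) (hy : ‖y‖ ≤ R) (hu : ‖u - x‖ ≤ δ) (hv : ‖v - y‖ ≤ δ) :
    |⟪u, v⟫ - ⟪x, y⟫| ≤ δ * (2 * R + δ) := by
  have h1 : ⟪u, v⟫ - ⟪x, y⟫ = ⟪u - x, v⟫ + ⟪x, v - y⟫ := by
    rw [inner_sub_left, inner_sub_right]; ring
  have h2 : |⟪u - x, v⟫| ≤ δ * (R + δ) := by
    refine (abs_real_inner_le_norm _ _).trans ?_
    have hv' : ‖v‖ ≤ R + δ := by
      calc ‖v‖ = ‖y + (v - y)‖ := by rw [add_sub_cancel]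
        _ ≤ ‖y‖ + ‖v - y‖ := norm_add_le _ _
        _ ≤ R + δ := add_le_add hy hv
    exact mul_le_mul hu hv' (norm_nonneg _) (by positivity)
  have h3 : |⟪x, v - y⟫| ≤ R * δ :=
    (abs_real_inner_le_norm _ _).trans (mul_le_mul hx hv (norm_nonneg _) hR0)
  calc |⟪u, v⟫ - ⟪x, y⟫| ≤ |⟪u - x, v⟫| + |⟪x, v - y⟫| := h1 ▸ abs_add_le _ _
    _ ≤ δ * (R + δ) + R * δ := add_le_add h2 h3
    _ = δ * (2 * R + δ) := by ring

lemma cyclically_monotone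
    (π : Measure (E × E)) [IsProbabilityMeasure π]
    (hint : Integrable (fun z : E × E => ⟪z.1, z.2⟫) π)
    (hopt : ∀ π' : Measure (E × E), IsProbabilityMeasure π' →
      π'.map Prod.fst = π.map Prod.fst → π'.map Prod.snd = π.map Prod.snd →
      ∫ z, ⟪z.1, z.2⟫ ∂π' ≤ ∫ z, ⟪z.1, z.2⟫ ∂π)
    (n : ℕ) (z : Fin (n + 1) → E × E) (hz : ∀ i, z i ∈ msupp π) :
    ∑ i, ⟪(z i).1, (z (i + 1)).2⟫ ≤ ∑ i, ⟪(z i).1, (z i).2⟫ := by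
  by_contra hcon
  push_neg at hcon
  set c : E × E → ℝ := fun w => ⟪w.1, w.2⟫ with hcdef
  have hc_cont : Continuous c := continuous_fst.inner continuous_snd
  set ε : ℝ := ∑ i, ⟪(z i).1, (z (i + 1)).2⟫ - ∑ i, ⟪(z i).1, (z i).2⟫ with hεdef
  have hε0 : 0 < ε := by simp only [hεdef]; linarith
  -- a bound on the norms of all points
  set R : ℝ := ∑ i, (‖(z i).1‖ + ‖(z i).2‖) with hRdef
  have hR0 : 0 ≤ R := Finset.sum_nonneg fun i _ => by positivity
  have hRb : ∀ i, ‖(z i).1‖ ≤ R ∧ ‖(z i).2‖ ≤ R := by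
    intro i
    have h := Finset.single_le_sum (f := fun i => ‖(z i).1‖ + ‖(z i).2‖)
      (fun j _ => by positivity) (Finset.mem_univ i)
    rw [← hRdef] at h
    constructor <;> [linarith [norm_nonneg (z i).2]; linarith [norm_nonneg (z i).1]]
  set ε4 : ℝ := ε / (4 * (n+1)) with hε4def
  have hε40 : 0 < ε4 := by
    apply div_pos hε0; positivity
  set δ : ℝ := min 1 (ε4 / (2 * R + 1)) with hδdef
  have hδ0 : 0 < δ := lt_min one_pos (div_pos hε40 (by linarith))
  have hδ1 : δ ≤ 1 := min_le_left _ _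
  have hδkey : δ * (2 * R + δ) ≤ ε4 := by
    have h1 : δ ≤ ε4 / (2 * R + 1) := min_le_right _ _
    have h2 : δ * (2 * R + 1) ≤ ε4 := by
      rw [← le_div_iff₀ (by linarith : (0:ℝ) < 2 * R + 1)]; exact h1
    nlinarith
  -- the key pointwise estimate
  have hest : ∀ (i j : Fin (n+1)) (u v : E), u ∈ Metric.closedBall (z i).1 δ →
      v ∈ Metric.closedBall (z j).2 δ → |⟪u, v⟫ - ⟪(z i).1, (z j).2⟫| ≤ ε4 := by
    intro i j u v hu hv
    rw [Metric.mem_closedBall, dist_eq_norm] at hu hv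
    exact (inner_est hR0 hδ0.le (hRb i).1 (hRb j).2 hu hv).trans hδkey
  -- the blocks
  set A : Fin (n+1) → Set (E × E) := fun i => Metric.ball (z i).1 δ ×ˢ Metric.ball (z i).2 δ with hAdef
  have hAopen : ∀ i, IsOpen (A i) := fun i => (Metric.isOpen_ball).prod Metric.isOpen_ball
  have hAmem : ∀ i, z i ∈ A i := fun i =>
    ⟨Metric.mem_ball_self hδ0, Metric.mem_ball_self hδ0⟩
  have hAmeas : ∀ i, MeasurableSet (A i) := fun i => (hAopen i).measurableSet
  set m : Fin (n+1) → ℝ≥0∞ := fun i => π (A i) with hmdef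
  have hm0 : ∀ i, m i ≠ 0 := fun i => (mem_msupp (hz i) (hAopen i) (hAmem i)).ne'
  have hmtop : ∀ i, m i ≠ ∞ := fun i => measure_ne_top π _
  set μ : Fin (n+1) → Measure (E × E) := fun i => π.restrict (A i) with hμdef
  set α : Fin (n+1) → Measure E := fun i => (μ i).map Prod.fst with hαdef
  set β : Fin (n+1) → Measure E := fun i => (μ i).map Prod.snd with hβdef
  have hμ_univ : ∀ i, μ i univ = m i := fun i => by
    simp [hμdef, Measure.restrict_apply, hmdef]
  have hα_univ : ∀ i, α i univ = m i := fun i => by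
    rw [hαdef, Measure.map_apply measurable_fst MeasurableSet.univ, preimage_univ, hμ_univ]
  have hβ_univ : ∀ i, β i univ = m i := fun i => by
    rw [hβdef, Measure.map_apply measurable_snd MeasurableSet.univ, preimage_univ, hμ_univ]
  have hμ_le : ∀ i, μ i ≤ π := fun i => Measure.restrict_le_self
  haveI hfinμ : ∀ i, IsFiniteMeasure (μ i) := fun i => isFiniteMeasure_of_le π (hμ_le i)
  haveI hfinα : ∀ i, IsFiniteMeasure (α i) := fun i =>
    ⟨by rw [hα_univ]; exact (measure_lt_top π _)⟩
  haveI hfinβ : ∀ i, IsFiniteMeasure (β i) := fun i =>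
    ⟨by rw [hβ_univ]; exact (measure_lt_top π _)⟩
  -- concentration of α i and β i on closed balls
  have hαconc : ∀ i, α i (Metric.closedBall (z i).1 δ)ᶜ = 0 := by
    intro i
    rw [hαdef, Measure.map_apply measurable_fst (Metric.isClosed_closedBall.measurableSet.compl),
      hμdef, Measure.restrict_apply (measurable_fst (Metric.isClosed_closedBall.measurableSet.compl))]
    refine measure_mono_null ?_ (measure_empty (μ := π))
    rintro w ⟨hw1, hw2, -⟩
    exact hw1 (Metric.ball_subset_closedBall hw2)
  have hβconc : ∀ i, β i (Metric.closedBall (z i).2 δ)ᶜ = 0 := by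
    intro i
    rw [hβdef, Measure.map_apply measurable_snd (Metric.isClosed_closedBall.measurableSet.compl),
      hμdef, Measure.restrict_apply (measurable_snd (Metric.isClosed_closedBall.measurableSet.compl))]
    refine measure_mono_null ?_ (measure_empty (μ := π))
    rintro w ⟨hw1, -, hw2⟩
    exact hw1 (Metric.ball_subset_closedBall hw2)
  -- coefficients
  obtain ⟨i₀, -, hi₀⟩ := Finset.exists_min_image Finset.univ m ⟨0, Finset.mem_univ 0⟩
  set NN : ℝ≥0∞ := ((n+1 : ℕ) : ℝ≥0∞) with hNNdef
  have hNN0 : NN ≠ 0 := by simp [hNNdef]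
  have hNNtop : NN ≠ ∞ := by simp [hNNdef]
  set lam : ℝ≥0∞ := m i₀ / NN with hlamdef
  have hlam0 : lam ≠ 0 := by
    simp only [hlamdef, ne_eq, ENNReal.div_eq_zero_iff, not_or]
    exact ⟨hm0 i₀, hNNtop⟩
  have hlamtop : lam ≠ ∞ := (ENNReal.div_lt_top (hmtop i₀) hNN0).ne
  set κ : Fin (n+1) → ℝ≥0∞ := fun i => lam / m i with hκdef
  have hκm : ∀ i, κ i * m i = lam := fun i => ENNReal.div_mul_cancel (hm0 i) (hmtop i)
  have hκtop : ∀ i, κ i ≠ ∞ := fun i => (ENNReal.div_lt_top hlamtop (hm0 i)).ne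
  have hκle : ∀ i, κ i ≤ 1 / NN := by
    intro i
    have h1 : lam ≤ m i / NN := by
      rw [hlamdef]
      exact ENNReal.div_le_div_right (hi₀ i (Finset.mem_univ i)) NN
    have h2 : κ i ≤ (m i / NN) / m i := by
      rw [hκdef]
      exact ENNReal.div_le_div_right h1 (m i)
    refine h2.trans (le_of_eq ?_)
    rw [div_eq_mul_inv, div_eq_mul_inv, div_eq_mul_inv, one_mul, mul_comm (m i) NN⁻¹,
      mul_assoc, ENNReal.mul_inv_cancel (hm0 i) (hmtop i), mul_one]
  -- the measures
  set ν : Measure (E × E) := ∑ i, κ i • μ i with hνdef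
  have hν_apply : ∀ s : Set (E × E), ν s = ∑ i, κ i * μ i s := by
    intro s
    rw [hνdef]
    simp [Measure.coe_finset_sum, Finset.sum_apply, Measure.smul_apply, smul_eq_mul]
  have hν_le : ν ≤ π := by
    refine Measure.le_iff.2 fun s hs => ?_
    rw [hν_apply]
    calc ∑ i, κ i * μ i s ≤ ∑ _i : Fin (n+1), (1 / NN) * π s := by
          refine Finset.sum_le_sum fun i _ => ?_
          exact mul_le_mul' (hκle i) (Measure.le_iff'.1 (hμ_le i) s)
      _ = π s := by
          rw [Finset.sum_const, Finset.card_univ, Fintype.card_fin, nsmul_eq_mul,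
            ← mul_assoc, ← hNNdef, mul_one_div, ENNReal.div_self hNN0 hNNtop, one_mul]
  haveI hνfin : IsFiniteMeasure ν := isFiniteMeasure_of_le π hν_le
  set σ : Measure (E × E) := π - ν with hσdef
  have hσν : σ + ν = π := Measure.sub_add_cancel_of_le hν_le
  have hσ_le : σ ≤ π := hσdef ▸ Measure.sub_le
  set ρ : Measure (E × E) := ∑ i, (κ i / m (i+1)) • ((α i).prod (β (i+1))) with hρdef
  have hρ_apply : ∀ s : Set (E × E), ρ s = ∑ i, (κ i / m (i+1)) * ((α i).prod (β (i+1))) s := by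
    intro s
    rw [hρdef]
    simp [Measure.coe_finset_sum, Finset.sum_apply, Measure.smul_apply, smul_eq_mul]
  set π' : Measure (E × E) := σ + ρ with hπ'def
  -- marginals agree
  have hμfst : ∀ i (s : Set E), MeasurableSet s → μ i (Prod.fst ⁻¹' s) = α i s := by
    intro i s hs
    rw [hαdef, Measure.map_apply measurable_fst hs]
  have hμsnd : ∀ i (s : Set E), MeasurableSet s → μ i (Prod.snd ⁻¹' s) = β i s := by
    intro i s hs
    rw [hβdef, Measure.map_apply measurable_snd hs]
  have hfst : π'.map Prod.fst = π.map Prod.fst := by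
    ext s hs
    rw [Measure.map_apply measurable_fst hs, Measure.map_apply measurable_fst hs,
      ← hσν, hπ'def]
    rw [Measure.add_apply, Measure.add_apply]
    congr 1
    rw [hρ_apply, hν_apply]
    refine Finset.sum_congr rfl fun i _ => ?_
    rw [hμfst i s hs, ← Set.prod_univ, Measure.prod_prod, hβ_univ,
      ← mul_assoc, mul_comm (κ i / m (i+1)) (α i s), mul_assoc,
      ENNReal.div_mul_cancel (hm0 _) (hmtop _), mul_comm]
  have hsnd : π'.map Prod.snd = π.map Prod.snd := by
    ext s hs
    rw [Measure.map_apply measurable_snd hs, Measure.map_apply measurable_snd hs,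
      ← hσν, hπ'def]
    rw [Measure.add_apply, Measure.add_apply]
    congr 1
    rw [hρ_apply, hν_apply]
    have : ∀ i, (κ i / m (i+1)) * ((α i).prod (β (i+1))) (Prod.snd ⁻¹' s)
        = κ (i+1) * β (i+1) s := by
      intro i
      rw [← Set.univ_prod, Measure.prod_prod, hα_univ]
      simp only [hκdef, div_eq_mul_inv]
      calc lam * (m i)⁻¹ * (m (i+1))⁻¹ * (m i * β (i+1) s)
          = lam * (m (i+1))⁻¹ * β (i+1) s * ((m i)⁻¹ * m i) := by ring
        _ = lam * (m (i+1))⁻¹ * β (i+1) s := by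
            rw [ENNReal.inv_mul_cancel (hm0 i) (hmtop i), mul_one]
    have h2 : ∀ i : Fin (n+1), κ i * μ i (Prod.snd ⁻¹' s) = κ i * β i s := fun i => by
      rw [hμsnd i s hs]
    rw [Finset.sum_congr rfl fun i _ => this i, Finset.sum_congr rfl fun i _ => h2 i]
    exact Fintype.sum_equiv (Equiv.addRight (1 : Fin (n+1)))
      (fun i => κ (i+1) * β (i+1) s) (fun i => κ i * β i s) (fun i => rfl)
  haveI hπ'prob : IsProbabilityMeasure π' := by
    constructor
    have h1 := congrArg (fun μ : Measure E => μ univ) hfst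
    simp only [Measure.map_apply measurable_fst MeasurableSet.univ, preimage_univ] at h1
    rw [h1]
    exact measure_univ
  -- real coefficient
  set l : ℝ := lam.toReal with hldef
  have hl0 : 0 < l := ENNReal.toReal_pos hlam0 hlamtop
  -- integrability
  have hIσ : Integrable c σ := hint.mono_measure hσ_le
  have hIνi : ∀ i, Integrable c (κ i • μ i) :=
    fun i => ((hint.mono_measure (hμ_le i)).smul_measure (hκtop i))
  have hIν : Integrable c ν := by
    rw [hνdef]; exact integrable_finset_sum_measure.2 fun i _ => hIνi i
  -- concentration of the product measures
  have hWconc : ∀ i, ((α i).prod (β (i+1)))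
      (Metric.closedBall (z i).1 δ ×ˢ Metric.closedBall (z (i+1)).2 δ)ᶜ = 0 := by
    intro i
    haveI := hfinα i; haveI := hfinβ (i+1)
    have hsub : (Metric.closedBall (z i).1 δ ×ˢ Metric.closedBall (z (i+1)).2 δ)ᶜ ⊆
        ((Metric.closedBall (z i).1 δ)ᶜ ×ˢ (univ : Set E)) ∪
        ((univ : Set E) ×ˢ (Metric.closedBall (z (i+1)).2 δ)ᶜ) := by
      intro w hw
      simp only [mem_compl_iff, mem_prod, not_and_or] at hw
      rcases hw with h | h
      · exact Or.inl ⟨h, mem_univ _⟩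
      · exact Or.inr ⟨mem_univ _, h⟩
    refine measure_mono_null hsub ?_
    refine le_antisymm ((measure_union_le _ _).trans ?_) zero_le
    rw [Measure.prod_prod, Measure.prod_prod, hαconc, hβconc]
    simp
  have hWae : ∀ i, ∀ᵐ w ∂((α i).prod (β (i+1))),
      w ∈ Metric.closedBall (z i).1 δ ×ˢ Metric.closedBall (z (i+1)).2 δ := by
    intro i
    rw [ae_iff]
    exact measure_mono_null (fun w hw => by simpa using hw) (hWconc i)
  have hIρi : ∀ i, Integrable c ((α i).prod (β (i+1))) := by
    intro i
    haveI := hfinα i; haveI := hfinβ (i+1)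
    refine Integrable.mono' (integrable_const ((R+1)*(R+1))) hc_cont.aestronglyMeasurable ?_
    filter_upwards [hWae i] with w hw
    obtain ⟨hw1, hw2⟩ := hw
    rw [Metric.mem_closedBall, dist_eq_norm] at hw1 hw2
    have h1 : ‖w.1‖ ≤ R + 1 := by
      have h := norm_sub_norm_le w.1 (z i).1
      have := (hRb i).1
      linarith
    have h2 : ‖w.2‖ ≤ R + 1 := by
      have h := norm_sub_norm_le w.2 (z (i+1)).2
      have := (hRb (i+1)).2
      linarith
    have h3 : |c w| ≤ ‖w.1‖ * ‖w.2‖ := abs_real_inner_le_norm _ _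
    rw [Real.norm_eq_abs]
    refine h3.trans ?_
    exact mul_le_mul h1 h2 (norm_nonneg _) (by linarith)
  have hIρci : ∀ i, Integrable c ((κ i / m (i+1)) • ((α i).prod (β (i+1)))) := fun i =>
    (hIρi i).smul_measure (ENNReal.div_lt_top (hκtop i) (hm0 (i+1))).ne
  have hIρ : Integrable c ρ := by
    rw [hρdef]; exact integrable_finset_sum_measure.2 fun i _ => hIρci i
  -- upper bound for ∫ c dν
  have hμint : ∀ i, ∫ w, c w ∂(μ i) ≤ (m i).toReal * (⟪(z i).1, (z i).2⟫ + ε4) := by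
    intro i
    have hb : ∀ w ∈ A i, c w ≤ ⟪(z i).1, (z i).2⟫ + ε4 := by
      intro w hw
      obtain ⟨hw1, hw2⟩ := hw
      have h := abs_le.1 (hest i i w.1 w.2 (Metric.ball_subset_closedBall hw1)
        (Metric.ball_subset_closedBall hw2))
      simp only [hcdef]
      linarith [h.2]
    calc ∫ w, c w ∂(μ i) = ∫ w in A i, c w ∂π := rfl
      _ ≤ ∫ _w in A i, (⟪(z i).1, (z i).2⟫ + ε4) ∂π :=
          setIntegral_mono_on hint.integrableOn
            (integrableOn_const (measure_ne_top π _)) (hAmeas i) hb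
      _ = (m i).toReal * (⟪(z i).1, (z i).2⟫ + ε4) := by
          rw [setIntegral_const, smul_eq_mul]; rfl
  have hNε : (n+1 : ℝ) * ε4 = ε / 4 := by
    rw [hε4def]
    field_simp
  have hνint : ∫ w, c w ∂ν ≤ l * (∑ i, ⟪(z i).1, (z i).2⟫) + l * (ε/4) := by
    rw [hνdef, integral_finset_sum_measure (fun i _ => hIνi i)]
    have heach : ∀ i, ∫ w, c w ∂(κ i • μ i) ≤ l * (⟪(z i).1, (z i).2⟫ + ε4) := by
      intro i
      rw [integral_smul_measure, smul_eq_mul]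
      have h1 : (κ i).toReal * ∫ w, c w ∂(μ i)
          ≤ (κ i).toReal * ((m i).toReal * (⟪(z i).1, (z i).2⟫ + ε4)) :=
        mul_le_mul_of_nonneg_left (hμint i) ENNReal.toReal_nonneg
      refine h1.trans (le_of_eq ?_)
      rw [← mul_assoc, ← ENNReal.toReal_mul, hκm i, hldef]
    refine (Finset.sum_le_sum fun i _ => heach i).trans (le_of_eq ?_)
    have : ∑ i : Fin (n+1), l * (⟪(z i).1, (z i).2⟫ + ε4)
        = l * (∑ i, ⟪(z i).1, (z i).2⟫) + (n+1 : ℝ) * (l * ε4) := by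
      simp only [mul_add, Finset.sum_add_distrib, Finset.mul_sum, Finset.sum_const,
        Finset.card_univ, Fintype.card_fin, nsmul_eq_mul]
      push_cast
      ring
    rw [this, ← hNε]
    ring
  -- lower bound for ∫ c dρ
  have hρiint : ∀ i, (m i * m (i+1)).toReal * (⟪(z i).1, (z (i+1)).2⟫ - ε4)
      ≤ ∫ w, c w ∂((α i).prod (β (i+1))) := by
    intro i
    haveI := hfinα i; haveI := hfinβ (i+1)
    have hb : ∀ᵐ w ∂((α i).prod (β (i+1))),
        (fun _ => (⟪(z i).1, (z (i+1)).2⟫ - ε4)) w ≤ c w := by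
      filter_upwards [hWae i] with w hw
      obtain ⟨hw1, hw2⟩ := hw
      have h := abs_le.1 (hest i (i+1) w.1 w.2 hw1 hw2)
      simp only [hcdef]
      linarith [h.1]
    have h := integral_mono_ae (integrable_const _) (hIρi i) hb
    rw [integral_const] at h
    have hμuniv : ((α i).prod (β (i+1))) univ = m i * m (i+1) := by
      rw [← Set.univ_prod_univ, Measure.prod_prod, hα_univ, hβ_univ]
    rw [Measure.real, hμuniv, smul_eq_mul] at h
    exact h
  have hρint : l * (∑ i, ⟪(z i).1, (z (i+1)).2⟫) - l * (ε/4) ≤ ∫ w, c w ∂ρ := by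
    rw [hρdef, integral_finset_sum_measure (fun i _ => hIρci i)]
    have heach : ∀ i, l * (⟪(z i).1, (z (i+1)).2⟫ - ε4)
        ≤ ∫ w, c w ∂((κ i / m (i+1)) • ((α i).prod (β (i+1)))) := by
      intro i
      rw [integral_smul_measure, smul_eq_mul]
      have hco : (κ i / m (i+1)).toReal * (m i * m (i+1)).toReal = l := by
        rw [← ENNReal.toReal_mul, hldef]
        congr 1
        rw [div_eq_mul_inv]
        calc κ i * (m (i+1))⁻¹ * (m i * m (i+1))
            = κ i * m i * ((m (i+1))⁻¹ * m (i+1)) := by ring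
          _ = lam := by rw [ENNReal.inv_mul_cancel (hm0 _) (hmtop _), mul_one, hκm]
      calc l * (⟪(z i).1, (z (i+1)).2⟫ - ε4)
          = (κ i / m (i+1)).toReal
            * ((m i * m (i+1)).toReal * (⟪(z i).1, (z (i+1)).2⟫ - ε4)) := by
            rw [← mul_assoc, hco]
        _ ≤ (κ i / m (i+1)).toReal * ∫ w, c w ∂((α i).prod (β (i+1))) :=
            mul_le_mul_of_nonneg_left (hρiint i) ENNReal.toReal_nonneg
    refine le_trans (le_of_eq ?_) (Finset.sum_le_sum fun i _ => heach i)
    have : ∑ i : Fin (n+1), l * (⟪(z i).1, (z (i+1)).2⟫ - ε4)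
        = l * (∑ i, ⟪(z i).1, (z (i+1)).2⟫) - (n+1 : ℝ) * (l * ε4) := by
      simp only [mul_sub, Finset.sum_sub_distrib, Finset.mul_sum, Finset.sum_const,
        Finset.card_univ, Fintype.card_fin, nsmul_eq_mul]
      push_cast
      ring
    rw [this, ← hNε]
    ring
  -- final contradiction
  have hπint : ∫ w, c w ∂π = ∫ w, c w ∂σ + ∫ w, c w ∂ν := by
    conv_lhs => rw [← hσν]
    rw [integral_add_measure hIσ hIν]
  have hπ'int : ∫ w, c w ∂π' = ∫ w, c w ∂σ + ∫ w, c w ∂ρ := by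
    rw [hπ'def, integral_add_measure hIσ hIρ]
  have hfinal := hopt π' hπ'prob hfst hsnd
  have hkey : l * (∑ i, ⟪(z i).1, (z (i + 1)).2⟫) - l * (∑ i, ⟪(z i).1, (z i).2⟫)
      = l * ε := by
    rw [hεdef]; ring
  have hlε : 0 < l * ε := mul_pos hl0 hε0
  linarith


/-- The value at `x` of the affine function associated to a chain `c`. -/
noncomputable def chainVal {n : ℕ} (c : Fin (n+1) → E × E) (x : E) : ℝ :=
  (∑ i : Fin n, ⟪(c i.castSucc).2, (c i.succ).1 - (c i.castSucc).1⟫) +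
    ⟪(c (Fin.last n)).2, x - (c (Fin.last n)).1⟫

lemma chainVal_affine {n : ℕ} (c : Fin (n+1) → E × E) (t : ℝ) (x y : E) :
    chainVal c (t • x + (1 - t) • y) = t * chainVal c x + (1 - t) * chainVal c y := by
  simp only [chainVal, inner_sub_right, inner_add_right, real_inner_smul_right]
  ring

lemma chainVal_snoc {n : ℕ} (c : Fin (n+1) → E × E) (p : E × E) (w : E) :
    chainVal (Fin.snoc c p) w = chainVal c p.1 + ⟪p.2, w - p.1⟫ := by
  simp only [chainVal, Fin.sum_univ_castSucc, Fin.snoc_castSucc, Fin.snoc_last,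
    Fin.succ_castSucc, Fin.succ_last]

lemma castSucc_add_one {n : ℕ} (i : Fin n) : (i.castSucc : Fin (n+1)) + 1 = i.succ := by
  ext
  simp [Fin.val_add_one_of_lt (Fin.castSucc_lt_last i)]

lemma chainVal_cyclic {n : ℕ} (c : Fin (n+1) → E × E) (z₀ : E × E) (hc0 : c 0 = z₀) :
    chainVal c z₀.1 = ∑ i : Fin (n+1), ⟪(c i).2, (c (i+1)).1 - (c i).1⟫ := by
  rw [Fin.sum_univ_castSucc]
  simp only [castSucc_add_one, Fin.last_add_one, hc0]
  rfl

/-- Rockafellar's construction. -/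
lemma rockafellar (S : Set (E × E)) (z₀ : E × E) (hz₀ : z₀ ∈ S)
    (hmono : ∀ (n : ℕ) (u : Fin (n+1) → E × E), (∀ i, u i ∈ S) →
      ∑ i, ⟪(u i).2, (u (i+1)).1 - (u i).1⟫ ≤ 0) :
    ∃ φ : E → EReal, (∀ x, φ x ≠ ⊥) ∧ IsConvexEReal φ ∧
      ∀ z ∈ S, φ z.1 ≠ ⊤ ∧
        ∀ w, φ z.1 + ((⟪z.2, w - z.1⟫ : ℝ) : EReal) ≤ φ w := by
  classical
  set Ch := Σ n : ℕ, {c : Fin (n+1) → E × E // c 0 = z₀ ∧ ∀ i, c i ∈ S} with hChdef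
  set φ : E → EReal := fun x => ⨆ p : Ch, ((chainVal p.2.1 x : ℝ) : EReal) with hφdef
  -- lower bound
  have hlb : ∀ x, ((⟪z₀.2, x - z₀.1⟫ : ℝ) : EReal) ≤ φ x := by
    intro x
    refine le_iSup_of_le (⟨0, fun _ => z₀, rfl, fun _ => hz₀⟩ : Ch) ?_
    simp [chainVal]
  have hbot : ∀ x, φ x ≠ ⊥ := by
    intro x
    exact ((EReal.bot_lt_coe _).trans_le (hlb x)).ne'
  -- extension of a chain by a point of S
  have hext : ∀ (p : Ch) (q : E × E), q ∈ S → ∃ p' : Ch,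
      ∀ w, chainVal p'.2.1 w = chainVal p.2.1 q.1 + ⟪q.2, w - q.1⟫ := by
    rintro ⟨n, c, hc0, hcS⟩ q hq
    refine ⟨⟨n+1, Fin.snoc c q, ?_, ?_⟩, fun w => chainVal_snoc c q w⟩
    · rw [show (0 : Fin (n+2)) = (0 : Fin (n+1)).castSucc from (Fin.castSucc_zero).symm,
        Fin.snoc_castSucc]
      exact hc0
    · intro i
      refine Fin.lastCases ?_ ?_ i
      · rw [Fin.snoc_last]; exact hq
      · intro j
        rw [Fin.snoc_castSucc]; exact hcS j
  -- every chain value at z₀.1 is ≤ 0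
  have hchain_le : ∀ p : Ch, chainVal p.2.1 z₀.1 ≤ 0 := by
    rintro ⟨n, c, hc0, hcS⟩
    rw [chainVal_cyclic c z₀ hc0]
    exact hmono n c hcS
  -- upper bound at points of S
  have hub : ∀ z ∈ S, φ z.1 ≤ ((⟪z.2, z.1 - z₀.1⟫ : ℝ) : EReal) := by
    intro z hzS
    refine iSup_le fun p => ?_
    obtain ⟨p', hp'⟩ := hext p z hzS
    have h1 := hchain_le p'
    rw [hp' z₀.1] at h1
    rw [EReal.coe_le_coe_iff]
    have h2 : (⟪z.2, z₀.1 - z.1⟫ : ℝ) = -⟪z.2, z.1 - z₀.1⟫ := by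
      rw [inner_sub_right, inner_sub_right]; ring
    rw [h2] at h1
    linarith
  have htop : ∀ z ∈ S, φ z.1 ≠ ⊤ :=
    fun z hzS => (((hub z hzS).trans_lt (EReal.coe_lt_top _))).ne
  refine ⟨φ, hbot, ?_, fun z hzS => ⟨htop z hzS, ?_⟩⟩
  · -- convexity
    intro x y t a b ht0 ht1 hxa hyb
    refine iSup_le fun p => ?_
    have hVx : chainVal p.2.1 x ≤ a :=
      EReal.coe_le_coe_iff.1 ((le_iSup (fun p : Ch => ((chainVal p.2.1 x : ℝ) : EReal)) p).trans hxa)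
    have hVy : chainVal p.2.1 y ≤ b :=
      EReal.coe_le_coe_iff.1 ((le_iSup (fun p : Ch => ((chainVal p.2.1 y : ℝ) : EReal)) p).trans hyb)
    rw [chainVal_affine, EReal.coe_le_coe_iff]
    have h1 : t * chainVal p.2.1 x ≤ t * a := mul_le_mul_of_nonneg_left hVx ht0
    have h2 : (1 - t) * chainVal p.2.1 y ≤ (1 - t) * b :=
      mul_le_mul_of_nonneg_left hVy (by linarith)
    linarith
  · -- subgradient inequality
    intro w
    rcases eq_or_ne (φ w) ⊤ with hw | hw
    · rw [hw]; exact le_top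
    have hxreal : φ z.1 = (((φ z.1).toReal : ℝ) : EReal) :=
      (EReal.coe_toReal (htop z hzS) (hbot z.1)).symm
    have hwreal : φ w = (((φ w).toReal : ℝ) : EReal) := (EReal.coe_toReal hw (hbot w)).symm
    set r : ℝ := (φ z.1).toReal
    set u : ℝ := (φ w).toReal
    set t : ℝ := ⟪z.2, w - z.1⟫
    rw [hxreal, hwreal, ← EReal.coe_add, EReal.coe_le_coe_iff]
    refine le_of_forall_pos_le_add fun η hη => ?_
    have h1 : ((r - η : ℝ) : EReal) < φ z.1 := by
      rw [hxreal, EReal.coe_lt_coe_iff]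
      linarith
    rw [hφdef, lt_iSup_iff] at h1
    obtain ⟨p, hp⟩ := h1
    rw [EReal.coe_lt_coe_iff] at hp
    obtain ⟨p', hp'⟩ := hext p z hzS
    have h2 : ((chainVal p'.2.1 w : ℝ) : EReal) ≤ φ w :=
      le_iSup (fun p : Ch => ((chainVal p.2.1 w : ℝ) : EReal)) p'
    rw [hwreal, EReal.coe_le_coe_iff] at h2
    rw [hp' w] at h2
    linarith

end Aux

/-- Brenier representation of optimal couplings for the scalar product surplus: if `P`, `Q`
have finite second moments, `P` is absolutely continuous w.r.t. Lebesgue measure, and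
`π ∈ M(P,Q)` is an optimal coupling for `Φ(x,y) = ⟪x,y⟫`, then there is a convex function
`φ : ℝ^d → ℝ ∪ {+∞}`, differentiable `P`-a.e. with gradient map `T = ∇φ`, such that
`Y = ∇φ(X)` holds `π`-a.s.; equivalently `π` is the image of `P` under `x ↦ (x, ∇φ(x))`,
and in particular `∇φ` pushes `P` forward to `Q`. -/
theorem mk_brenier_representation
    {d : ℕ} (P Q : Measure (EuclideanSpace ℝ (Fin d)))
    [IsProbabilityMeasure P] [IsProbabilityMeasure Q]
    (hP2 : Integrable (fun x => ‖x‖ ^ 2) P) (hQ2 : Integrable (fun y => ‖y‖ ^ 2) Q)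
    (hPac : P ≪ (volume : Measure (EuclideanSpace ℝ (Fin d))))
    (π : Measure (EuclideanSpace ℝ (Fin d) × EuclideanSpace ℝ (Fin d)))
    [IsProbabilityMeasure π]
    (hπ₁ : π.map Prod.fst = P) (hπ₂ : π.map Prod.snd = Q)
    -- π is an optimal coupling for the scalar product surplus
    (hopt : ∀ π' : Measure (EuclideanSpace ℝ (Fin d) × EuclideanSpace ℝ (Fin d)),
      IsProbabilityMeasure π' → π'.map Prod.fst = P → π'.map Prod.snd = Q →
      ∫ z, ⟪z.1, z.2⟫ ∂π' ≤ ∫ z, ⟪z.1, z.2⟫ ∂π) :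
    ∃ (φ : EuclideanSpace ℝ (Fin d) → EReal)
      (T : EuclideanSpace ℝ (Fin d) → EuclideanSpace ℝ (Fin d)),
      -- φ is convex, with values in ℝ ∪ {+∞}
      (∀ x, φ x ≠ ⊥) ∧ IsConvexEReal φ ∧ Measurable T ∧
      -- φ is differentiable P-a.e., with gradient T = ∇φ
      (∀ᵐ x ∂P, φ x ≠ ⊤ ∧ HasGradientAt (fun z => (φ z).toReal) (T x) x) ∧
      -- Y = ∇φ(X) holds π-almost surely
      (∀ᵐ z ∂π, z.2 = T z.1) ∧
      -- equivalently, π is the image of P under x ↦ (x, ∇φ(x))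
      π = P.map (fun x => (x, T x)) ∧
      -- and in particular ∇φ pushes P forward to Q
      P.map T = Q := by
  classical
  set E := EuclideanSpace ℝ (Fin d) with hEdef
  -- integrability of the cost
  have hc_cont : Continuous (fun z : E × E => ⟪z.1, z.2⟫) := continuous_fst.inner continuous_snd
  have hint : Integrable (fun z : E × E => ⟪z.1, z.2⟫) π := by
    have hP2' : Integrable (fun x : E => ‖x‖ ^ 2) (π.map Prod.fst) := by rwa [hπ₁]
    have hQ2' : Integrable (fun y : E => ‖y‖ ^ 2) (π.map Prod.snd) := by rwa [hπ₂]
    have h1 : Integrable (fun z : E × E => ‖z.1‖ ^ 2) π :=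
      (integrable_map_measure hP2'.aestronglyMeasurable measurable_fst.aemeasurable).1 hP2'
    have h2 : Integrable (fun z : E × E => ‖z.2‖ ^ 2) π :=
      (integrable_map_measure hQ2'.aestronglyMeasurable measurable_snd.aemeasurable).1 hQ2'
    refine Integrable.mono' (((h1.add h2).div_const 2)) hc_cont.aestronglyMeasurable ?_
    filter_upwards with z
    rw [Real.norm_eq_abs]
    have h3 := abs_real_inner_le_norm z.1 z.2
    have h4 : ‖z.1‖ * ‖z.2‖ ≤ (‖z.1‖ ^ 2 + ‖z.2‖ ^ 2) / 2 := by
      nlinarith [sq_nonneg (‖z.1‖ - ‖z.2‖)]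
    exact h3.trans h4
  -- optimality in terms of π's own marginals
  have hopt' : ∀ π' : Measure (E × E), IsProbabilityMeasure π' →
      π'.map Prod.fst = π.map Prod.fst → π'.map Prod.snd = π.map Prod.snd →
      ∫ z, ⟪z.1, z.2⟫ ∂π' ≤ ∫ z, ⟪z.1, z.2⟫ ∂π := by
    intro π' h1 h2 h3
    exact hopt π' h1 (by rw [h2, hπ₁]) (by rw [h3, hπ₂])
  -- support and cyclical monotonicity
  obtain ⟨z₀, hz₀⟩ := msupp_nonempty π
  have hcyc := cyclically_monotone π hint hopt'
  have hmono : ∀ (n : ℕ) (u : Fin (n+1) → E × E), (∀ i, u i ∈ msupp π) →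
      ∑ i, ⟪(u i).2, (u (i+1)).1 - (u i).1⟫ ≤ 0 := by
    intro n u hu
    have h1 := hcyc n (fun i => u (-i)) (fun i => hu (-i))
    have h2 : ∑ i : Fin (n+1), ⟪(u (-i)).1, (u (-(i+1))).2⟫
        = ∑ i : Fin (n+1), ⟪(u (i+1)).1, (u i).2⟫ := by
      refine Fintype.sum_equiv ((Equiv.addRight (1 : Fin (n+1))).trans (Equiv.neg _)) _ _
        fun i => ?_
      simp only [Equiv.trans_apply, Equiv.coe_addRight, Equiv.neg_apply]
      rw [show (-(i + 1) + 1 : Fin (n+1)) = -i from by abel]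
    have h3 : ∑ i : Fin (n+1), ⟪(u (-i)).1, (u (-i)).2⟫
        = ∑ i : Fin (n+1), ⟪(u i).1, (u i).2⟫ :=
      Fintype.sum_equiv (Equiv.neg _) _ _ fun i => rfl
    rw [h2, h3] at h1
    have h4 : ∀ i : Fin (n+1), ⟪(u i).2, (u (i+1)).1 - (u i).1⟫
        = ⟪(u (i+1)).1, (u i).2⟫ - ⟪(u i).1, (u i).2⟫ := by
      intro i
      rw [inner_sub_right, real_inner_comm, real_inner_comm ((u i).2) ((u i).1)]
    rw [Finset.sum_congr rfl fun i _ => h4 i, Finset.sum_sub_distrib]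
    linarith
  -- the Rockafellar potential
  obtain ⟨φ, hφbot, hφconv, hφS⟩ := rockafellar (msupp π) z₀ hz₀ hmono
  -- the set where φ is finite
  set A : Set E := {x | φ x ≠ ⊤} with hAdef
  have hAconv : Convex ℝ A := by
    intro x hx y hy a b ha hb hab
    have hxa : φ x ≤ (((φ x).toReal : ℝ) : EReal) := (EReal.coe_toReal hx (hφbot x)).symm.le
    have hyb : φ y ≤ (((φ y).toReal : ℝ) : EReal) := (EReal.coe_toReal hy (hφbot y)).symm.le
    have h := hφconv x y a _ _ ha (by linarith) hxa hyb
    have hb' : b = 1 - a := by linarith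
    rw [hb']
    exact (h.trans_lt (EReal.coe_lt_top _)).ne
  have hSsubA : ∀ z ∈ msupp π, z.1 ∈ A := fun z hz => (hφS z hz).1
  -- P gives full measure to the interior of A
  have hπS : π (msupp π)ᶜ = 0 := msupp_compl_null π
  have hπS1 : π (msupp π) = 1 := by
    have h := measure_add_measure_compl (μ := π) (isClosed_msupp π).measurableSet
    rw [hπS, add_zero, measure_univ] at h
    exact h
  have hPclos : P (closure A) = 1 := by
    rw [← hπ₁, Measure.map_apply measurable_fst isClosed_closure.measurableSet]
    refine le_antisymm prob_le_one ?_
    rw [← hπS1]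
    exact measure_mono fun w hw => subset_closure (hSsubA w hw)
  have hfr : volume (frontier A) = 0 := hAconv.addHaar_frontier volume
  have hPfr : P (frontier A) = 0 := hPac hfr
  set D : Set E := interior A with hDdef
  have hDopen : IsOpen D := isOpen_interior
  have hPD : P D = 1 := by
    have h1 : closure A ⊆ D ∪ frontier A := by
      intro x hx
      by_cases h : x ∈ D
      · exact Or.inl h
      · exact Or.inr ⟨hx, h⟩
    have h2 : P (closure A) ≤ P D + P (frontier A) :=
      (measure_mono h1).trans (measure_union_le _ _)
    rw [hPfr, add_zero, hPclos] at h2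
    exact le_antisymm prob_le_one h2
  -- the real-valued potential
  set f : E → ℝ := fun x => (φ x).toReal with hfdef
  have hfconv : ConvexOn ℝ D f := by
    refine ⟨hAconv.interior, ?_⟩
    intro x hx y hy a b ha hb hab
    have hxA : φ x ≠ ⊤ := interior_subset hx
    have hyA : φ y ≠ ⊤ := interior_subset hy
    have hxa : φ x ≤ ((f x : ℝ) : EReal) := (EReal.coe_toReal hxA (hφbot x)).symm.le
    have hyb : φ y ≤ ((f y : ℝ) : EReal) := (EReal.coe_toReal hyA (hφbot y)).symm.le
    have h := hφconv x y a (f x) (f y) ha (by linarith) hxa hyb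
    have hb' : b = 1 - a := by linarith
    rw [hb']
    have h2 := EReal.toReal_le_toReal h (hφbot _) (EReal.coe_ne_top _)
    rwa [EReal.toReal_coe] at h2
  -- local Lipschitz continuity and a.e. differentiability
  have hLL : LocallyLipschitzOn D f := hfconv.locallyLipschitzOn hDopen
  have hdiff_vol : ∀ᵐ x ∂(volume : Measure E), x ∈ D → DifferentiableAt ℝ f x := by
    have hcov : ∀ x : D, ∃ s : Set E, IsOpen s ∧ (x : E) ∈ s ∧ s ⊆ D ∧
        ∃ K, LipschitzOnWith K f s := by
      rintro ⟨x, hx⟩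
      obtain ⟨K, t, ht, hK⟩ := hLL hx
      rw [mem_nhdsWithin] at ht
      obtain ⟨u, huopen, hxu, hut⟩ := ht
      exact ⟨u ∩ D, huopen.inter hDopen, ⟨hxu, hx⟩, inter_subset_right, K, hK.mono hut⟩
    choose s hsopen hsmem hssub hsK using hcov
    obtain ⟨T', hT'c, hT'u⟩ := TopologicalSpace.isOpen_iUnion_countable s hsopen
    have hae : ∀ᵐ x ∂(volume : Measure E), ∀ i ∈ T', x ∈ s i → DifferentiableAt ℝ f x := by
      rw [ae_ball_iff hT'c]
      intro i _
      obtain ⟨K, hK⟩ := hsK i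
      filter_upwards [hK.ae_differentiableWithinAt_of_mem] with x hx hxs
      exact (hx hxs).differentiableAt ((hsopen i).mem_nhds hxs)
    filter_upwards [hae] with x hx hxD
    have hxmem : x ∈ ⋃ i ∈ T', s i := by
      rw [hT'u]
      exact mem_iUnion.2 ⟨⟨x, hxD⟩, hsmem _⟩
    rw [mem_iUnion₂] at hxmem
    obtain ⟨i, hiT, hxi⟩ := hxmem
    exact hx i hiT hxi
  -- the gradient map
  set T : E → E := fun x => (InnerProductSpace.toDual ℝ E).symm (fderiv ℝ f x) with hTdef
  have hTmeas : Measurable T :=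
    ((InnerProductSpace.toDual ℝ E).symm.continuous.measurable).comp (measurable_fderiv ℝ f)
  have hTgrad : ∀ x, DifferentiableAt ℝ f x → HasGradientAt f (T x) x := by
    intro x hx
    exact hx.hasGradientAt
  -- P-a.e. differentiability
  have haeD : ∀ᵐ x ∂P, x ∈ D := by
    rw [ae_iff]
    have : {x : E | ¬x ∈ D} = Dᶜ := rfl
    rw [this]
    exact (prob_compl_eq_zero_iff hDopen.measurableSet).2 hPD
  have haediff : ∀ᵐ x ∂P, x ∈ D → DifferentiableAt ℝ f x :=
    (Measure.ae_le_iff_absolutelyContinuous.2 hPac) hdiff_vol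
  have haeP : ∀ᵐ x ∂P, φ x ≠ ⊤ ∧ HasGradientAt f (T x) x := by
    filter_upwards [haeD, haediff] with x h1 h2
    exact ⟨interior_subset h1, hTgrad x (h2 h1)⟩
  -- the π-a.s. identity Y = T X
  set G : Set E := D ∩ {x | DifferentiableAt ℝ f x} with hGdef
  have hGmeas : MeasurableSet G :=
    hDopen.measurableSet.inter (measurableSet_of_differentiableAt ℝ f)
  have hPG : P Gᶜ = 0 := by
    have h : ∀ᵐ x ∂P, x ∈ G := by
      filter_upwards [haeD, haediff] with x h1 h2
      exact ⟨h1, h2 h1⟩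
    rw [ae_iff] at h
    exact h
  have hπae : ∀ᵐ w ∂π, w ∈ msupp π ∧ w.1 ∈ G := by
    have ha : ∀ᵐ w ∂π, w ∈ msupp π := by
      rw [ae_iff]
      exact hπS
    have hb : ∀ᵐ w ∂π, w.1 ∈ G := by
      rw [ae_iff]
      have heq : {w : E × E | ¬w.1 ∈ G} = Prod.fst ⁻¹' Gᶜ := rfl
      rw [heq, ← Measure.map_apply measurable_fst hGmeas.compl, hπ₁]
      exact hPG
    filter_upwards [ha, hb] with w h1 h2
    exact ⟨h1, h2⟩
  have hfinal_ae : ∀ᵐ w ∂π, w.2 = T w.1 := by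
    filter_upwards [hπae] with w hw
    have hwS := hw.1
    have hwD := hw.2.1
    have hwdiff := hw.2.2
    have hsub := (hφS w hwS).2
    have hxA : φ w.1 ≠ ⊤ := interior_subset hwD
    -- local minimum of h := f - ⟪y, ·⟫ at x
    have hmin : IsLocalMin (fun v => f v - ⟪w.2, v⟫) w.1 := by
      filter_upwards [hDopen.mem_nhds hwD] with v hv
      have h1 := hsub v
      have hvA : φ v ≠ ⊤ := interior_subset hv
      rw [← EReal.coe_toReal hvA (hφbot v), ← EReal.coe_toReal hxA (hφbot w.1),
        ← EReal.coe_add, EReal.coe_le_coe_iff] at h1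
      have h2 : ⟪w.2, v - w.1⟫ = ⟪w.2, v⟫ - ⟪w.2, w.1⟫ := inner_sub_right _ _ _
      simp only [hfdef] at h1 ⊢
      linarith
    have hfd := hmin.fderiv_eq_zero
    have hsplit : fderiv ℝ (fun v => f v - ⟪w.2, v⟫) w.1
        = fderiv ℝ f w.1 - innerSL ℝ w.2 := by
      have hdy : DifferentiableAt ℝ (fun v : E => (⟪w.2, v⟫ : ℝ)) w.1 :=
        (innerSL ℝ w.2).differentiableAt
      rw [fderiv_fun_sub hwdiff hdy]
      congr 1
      exact (innerSL ℝ w.2).fderiv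
    rw [hsplit, sub_eq_zero] at hfd
    have h5 : innerSL ℝ w.2 = InnerProductSpace.toDual ℝ E w.2 := by
      ext v
      exact (InnerProductSpace.toDual_apply_apply (E := E)).symm
    rw [h5] at hfd
    show w.2 = T w.1
    rw [hTdef]
    simp only [hfd]
    rw [LinearIsometryEquiv.symm_apply_apply]
  -- the pushforward identities
  have hFmeas : Measurable (fun x : E => (x, T x)) := measurable_id.prodMk hTmeas
  have hmapπ : π = P.map (fun x => (x, T x)) := by
    have h1 : π.map (fun w : E × E => (w.1, T w.1)) = π := by
      have hae : (fun w : E × E => (w.1, T w.1)) =ᵐ[π] id := by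
        filter_upwards [hfinal_ae] with w hw
        simp [Prod.ext_iff, ← hw]
      rw [Measure.map_congr hae, Measure.map_id]
    have h2 : π.map ((fun x : E => (x, T x)) ∘ Prod.fst) = P.map (fun x => (x, T x)) := by
      rw [← Measure.map_map hFmeas measurable_fst, hπ₁]
    rw [← h1]
    exact h2
  have hmapT : P.map T = Q := by
    rw [← hπ₂, hmapπ, Measure.map_map measurable_snd hFmeas]
    rfl
  exact ⟨φ, T, hφbot, hφconv, hTmeas, haeP, hfinal_ae, hmapπ, hmapT⟩
end
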